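/- arXiv:1511.02349 — 3 statements merged into one kernel-verified Lean document; each statement's English description precedes it below -/
import Mathlib

section
/- Let R ⊆ H be a finite-dimensional Hopf subalgebra pair over a field k, with quotient right H-module Q = H/R⁺H. If H ⊇ R is a right semisimple extension (every right H-module N satisfies N | N ⊗_R H), then the trivial module k_ε is a direct summand of Q as right H-modules. -/
open TensorProduct MulOpposite

universe u

variable (k : Type u) (H : Type u) [Field k] [Ring H] [HopfAlgebra k H]

/-- The counit of `H`, as a ring homomorphism out of `Hᵐᵒᵖ` (so that it equips
`k` with the structure of right `H`-module `k_ε`). -/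
noncomputable def counitOp : Hᵐᵒᵖ →+* k :=
  ((Bialgebra.counitAlgHom k H).toRingHom).fromOpposite fun _ _ => mul_comm _ _

/-- The trivial right `H`-module `k_ε`. -/
def TrivMod : Type u := k

instance : AddCommGroup (TrivMod k) := inferInstanceAs (AddCommGroup k)

noncomputable instance : Module Hᵐᵒᵖ (TrivMod k) :=
  Module.compHom k (counitOp k H)

variable (R : Subalgebra k H)

/-- The right ideal `R⁺H` generated by `R⁺ = R ∩ ker ε`. -/
noncomputable def augRightIdeal : Submodule Hᵐᵒᵖ H :=
  Submodule.span Hᵐᵒᵖ {r : H | r ∈ R ∧ Coalgebra.counit (R := k) r = 0}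

/-- The quotient right `H`-module `Q = H / R⁺H`. -/
abbrev QuotientMod := H ⧸ augRightIdeal k H R

/-- The induced module `N ⊗_R H` of a right `H`-module `N` (written with the
`H` factor on the left, carrying the right `H`-action), realized as the
quotient of `H ⊗_k N` by the subbimodule generated by the relations
`(r·h) ⊗ n - h ⊗ (n·r)` for `r ∈ R`. -/
noncomputable abbrev IndMod (N : Type u) [AddCommGroup N] [Module k N]
    [Module Hᵐᵒᵖ N] :=
  (H ⊗[k] N) ⧸ Submodule.span Hᵐᵒᵖ
    {z : H ⊗[k] N | ∃ r ∈ R, ∃ h : H, ∃ n : N,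
      z = (r * h) ⊗ₜ[k] n - h ⊗ₜ[k] (op r • n)}

/-- `M` is a direct summand of `r` copies of `N`. -/
def Divides (A : Type*) [Ring A] (M N : Type*) [AddCommGroup M] [Module A M]
    [AddCommGroup N] [Module A N] (r : ℕ) : Prop :=
  ∃ (i : M →ₗ[A] (Fin r → N)) (p : (Fin r → N) →ₗ[A] M), p.comp i = LinearMap.id



noncomputable instance : Module k (TrivMod k) := inferInstanceAs (Module k k)

lemma trivSmul (a : Hᵐᵒᵖ) (x : TrivMod k) :
    a • x = Coalgebra.counit (R := k) (unop a) • x := rfl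

instance : IsScalarTower k Hᵐᵒᵖ (TrivMod k) :=
  ⟨fun c a x => by
    have h1 : Coalgebra.counit (R := k) (unop (c • a))
        = c * Coalgebra.counit (R := k) (unop a) := by
      rw [unop_smul, map_smul, smul_eq_mul]
    rw [trivSmul, trivSmul, h1, mul_smul]⟩

def tk : TrivMod k →ₗ[k] k :=
  { toFun := fun x => x, map_add' := fun _ _ => rfl, map_smul' := fun _ _ => rfl }

def e1 : TrivMod k := (1 : k)

noncomputable def relSub : Submodule Hᵐᵒᵖ (H ⊗[k] TrivMod k) :=
  Submodule.span Hᵐᵒᵖ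
    {z : H ⊗[k] TrivMod k | ∃ r ∈ R, ∃ h : H, ∃ n : TrivMod k,
      z = (r * h) ⊗ₜ[k] n - h ⊗ₜ[k] (op r • n)}

noncomputable def F0 : H ⊗[k] TrivMod k →ₗ[k] H :=
  (TensorProduct.rid k H).toLinearMap ∘ₗ TensorProduct.map LinearMap.id (tk k)

lemma F0_tmul (h : H) (n : TrivMod k) : F0 k H (h ⊗ₜ n) = tk k n • h := by
  simp [F0]

noncomputable def psi : H ⊗[k] TrivMod k →ₗ[Hᵐᵒᵖ] QuotientMod k H R :=
  { toFun := fun x => (augRightIdeal k H R).mkQ (F0 k H x)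
    map_add' := by intro x y; simp
    map_smul' := by
      intro a x
      induction x using TensorProduct.induction_on with
      | zero => simp
      | tmul h n =>
        show (augRightIdeal k H R).mkQ (F0 k H (a • (h ⊗ₜ[k] n)))
            = a • (augRightIdeal k H R).mkQ (F0 k H (h ⊗ₜ[k] n))
        rw [smul_tmul', F0_tmul, F0_tmul, ← map_smul]
        congr 1
        exact smul_comm _ _ _
      | add x y hx hy =>
        show (augRightIdeal k H R).mkQ (F0 k H (a • (x + y)))
            = a • (augRightIdeal k H R).mkQ (F0 k H (x + y))
        rw [smul_add, map_add, map_add, map_add, map_add, smul_add]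
        rw [RingHom.id_apply] at hx hy
        exact congrArg₂ (· + ·) hx hy }

lemma psi_ker : relSub k H R ≤ LinearMap.ker (psi k H R) := by
  rw [relSub, Submodule.span_le]
  rintro z ⟨r, hr, h, n, rfl⟩
  simp only [SetLike.mem_coe, LinearMap.mem_ker]
  show (augRightIdeal k H R).mkQ (F0 k H _) = 0
  rw [map_sub, F0_tmul, F0_tmul, Submodule.mkQ_apply, Submodule.Quotient.mk_eq_zero]
  have key : tk k n • (r * h) - tk k (op r • n) • h
      = op h • ((tk k n • r) - Coalgebra.counit (R := k) (tk k n • r) • (1 : H)) := by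
    rw [op_smul_eq_mul, trivSmul, unop_op, map_smul, map_smul, smul_eq_mul, smul_eq_mul]
    rw [sub_mul, smul_mul_assoc, smul_mul_assoc, one_mul, mul_comm (tk k n)]
  rw [key]
  refine Submodule.smul_mem _ _ (Submodule.subset_span ⟨?_, ?_⟩)
  · exact R.sub_mem (R.smul_mem hr _) (R.smul_mem R.one_mem _)
  · rw [map_sub, map_smul, map_smul, Bialgebra.counit_one, smul_eq_mul, smul_eq_mul,
      mul_one, sub_self]

noncomputable def Fbar : (H ⊗[k] TrivMod k) ⧸ relSub k H R →ₗ[Hᵐᵒᵖ] QuotientMod k H R :=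
  (relSub k H R).liftQ (psi k H R) (psi_ker k H R)

noncomputable def phi : H →ₗ[Hᵐᵒᵖ] (H ⊗[k] TrivMod k) ⧸ relSub k H R :=
  { toFun := fun h => (relSub k H R).mkQ (h ⊗ₜ e1 k)
    map_add' := by
      intro x y
      show (relSub k H R).mkQ ((x + y) ⊗ₜ e1 k) = _
      rw [add_tmul, map_add]
    map_smul' := by
      intro a h
      show (relSub k H R).mkQ ((a • h) ⊗ₜ e1 k) = a • (relSub k H R).mkQ (h ⊗ₜ e1 k)
      rw [← smul_tmul', ← map_smul] }

lemma phi_ker : augRightIdeal k H R ≤ LinearMap.ker (phi k H R) := by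
  rw [augRightIdeal, Submodule.span_le]
  rintro x ⟨hx, hx0⟩
  simp only [SetLike.mem_coe, LinearMap.mem_ker]
  show (relSub k H R).mkQ (x ⊗ₜ e1 k) = 0
  rw [Submodule.mkQ_apply, Submodule.Quotient.mk_eq_zero]
  refine Submodule.subset_span ⟨x, hx, 1, e1 k, ?_⟩
  have h0 : op x • e1 k = 0 := by
    rw [trivSmul, unop_op, hx0, zero_smul]
  rw [h0, tmul_zero, sub_zero, mul_one]

noncomputable def Gbar : QuotientMod k H R →ₗ[Hᵐᵒᵖ] (H ⊗[k] TrivMod k) ⧸ relSub k H R :=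
  (augRightIdeal k H R).liftQ (phi k H R) (phi_ker k H R)

lemma Gbar_Fbar (x : (H ⊗[k] TrivMod k) ⧸ relSub k H R) :
    Gbar k H R (Fbar k H R x) = x := by
  obtain ⟨y, rfl⟩ := Submodule.mkQ_surjective _ x
  induction y using TensorProduct.induction_on with
  | zero => simp
  | tmul h n =>
    rw [Submodule.mkQ_apply, Fbar, Submodule.liftQ_apply]
    show Gbar k H R ((augRightIdeal k H R).mkQ (F0 k H (h ⊗ₜ n))) = _
    rw [F0_tmul, Submodule.mkQ_apply, Gbar, Submodule.liftQ_apply]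
    show (relSub k H R).mkQ ((tk k n • h) ⊗ₜ e1 k) = _
    rw [smul_tmul]
    have h2 : (tk k n) • e1 k = n := by
      show tk k n * (1 : k) = n
      rw [mul_one]; rfl
    rw [h2, Submodule.mkQ_apply]
  | add x y hx hy =>
    rw [Submodule.mkQ_apply] at hx hy ⊢
    rw [Submodule.Quotient.mk_add, map_add, map_add, hx, hy]

/-- **Part of the relative Maschke theorem.** If `R ⊆ H` is a Hopf subalgebra
pair of finite-dimensional Hopf algebras over a field `k` and `H ⊇ R` is a
right semisimple extension (every right `H`-module `N` is a direct summand of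
the induced module `N ⊗_R H`), then the trivial module `k_ε` is a direct
summand of the quotient module `Q = H/R⁺H` as right `H`-modules. -/
theorem trivial_divides_quotient_of_semisimple_extension
    [FiniteDimensional k H]
    (hcomul : ∀ r ∈ R, Coalgebra.comul (R := k) (r : H) ∈
      LinearMap.range (TensorProduct.map R.val.toLinearMap R.val.toLinearMap))
    (hantipode : ∀ r ∈ R, HopfAlgebra.antipode (R := k) (A := H) r ∈ R)
    (hss : ∀ (N : Type u) [AddCommGroup N] [Module k N] [Module Hᵐᵒᵖ N]
      [IsScalarTower k Hᵐᵒᵖ N], Divides Hᵐᵒᵖ N (IndMod k H R N) 1) :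
    Divides Hᵐᵒᵖ (TrivMod k) (QuotientMod k H R) 1 := by
  obtain ⟨i, p, hpi⟩ := hss (TrivMod k)
  refine ⟨((Fbar k H R).compLeft (Fin 1)).comp i, p.comp ((Gbar k H R).compLeft (Fin 1)), ?_⟩
  ext x
  show p ((Gbar k H R).compLeft (Fin 1) (((Fbar k H R).compLeft (Fin 1)) (i x))) = x
  have h2 : (Gbar k H R).compLeft (Fin 1) (((Fbar k H R).compLeft (Fin 1)) (i x)) = i x := by
    funext j
    exact Gbar_Fbar k H R (i x j)
  rw [h2]
  exact LinearMap.ext_iff.mp hpi x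
end

section
/- Let U ≤ G be finite groups, H = kG, R = kU, Q = H/R⁺H, and N the core of U in G (the largest normal subgroup of G contained in U). Then the maximal Hopf ideal contained in the annihilator of the H-module Q equals kN⁺H. -/
open TensorProduct MonoidAlgebra

universe u

variable (k : Type u) [Field k] (G : Type u) [Group G]

/-- The counit of the group Hopf algebra `kG`, `g ↦ 1`. -/
noncomputable def counitG : MonoidAlgebra k G →ₐ[k] k :=
  MonoidAlgebra.lift k k G 1

/-- The comultiplication of the group Hopf algebra `kG`, `g ↦ g ⊗ g`. -/
noncomputable def comulG :
    MonoidAlgebra k G →ₐ[k] MonoidAlgebra k G ⊗[k] MonoidAlgebra k G :=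
  MonoidAlgebra.lift k _ G
    { toFun := fun g => single g (1 : k) ⊗ₜ[k] single g (1 : k)
      map_one' := by simp [Algebra.TensorProduct.one_def, MonoidAlgebra.one_def]
      map_mul' := fun x y => by simp [Algebra.TensorProduct.tmul_mul_tmul, MonoidAlgebra.single_mul_single] }

/-- The antipode of the group Hopf algebra `kG`, `g ↦ g⁻¹`. -/
noncomputable def antipodeG : MonoidAlgebra k G →ₗ[k] MonoidAlgebra k G :=
  MonoidAlgebra.mapDomainLinearMap k k fun g : G => g⁻¹

/-- A Hopf ideal of the group Hopf algebra `kG`: a two-sided ideal `J` with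
`ε(J) = 0`, `Δ(J) ⊆ J ⊗ H + H ⊗ J` and `S(J) ⊆ J`. -/
def IsHopfIdeal (J : Submodule k (MonoidAlgebra k G)) : Prop :=
  (∀ a ∈ J, ∀ h : MonoidAlgebra k G, h * a ∈ J ∧ a * h ∈ J) ∧
  (∀ a ∈ J, counitG k G a = 0) ∧
  (∀ a ∈ J, comulG k G a ∈
    LinearMap.range (TensorProduct.map J.subtype LinearMap.id) ⊔
      LinearMap.range (TensorProduct.map LinearMap.id J.subtype)) ∧
  (∀ a ∈ J, antipodeG k G a ∈ J)

variable (U : Subgroup G)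

/-- The right ideal `(kU)⁺·kG` generated by the augmentation ideal of a
subgroup `U ≤ G`. -/
noncomputable def augIdealOf (V : Subgroup G) : Submodule k (MonoidAlgebra k G) :=
  Submodule.span k {x : MonoidAlgebra k G |
    ∃ u ∈ V, ∃ h : MonoidAlgebra k G, x = (single u (1 : k) - 1) * h}


section Helpers

variable {k G}

lemma counitG_single (g : G) (c : k) : counitG k G (single g c) = c := by
  simp [counitG, MonoidAlgebra.lift_single]

lemma comulG_single (g : G) (c : k) :
    comulG k G (single g c) = c • (single g (1:k) ⊗ₜ[k] single g (1:k)) := by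
  simp [comulG, MonoidAlgebra.lift_single]

lemma antipodeG_single (g : G) (c : k) : antipodeG k G (single g c) = single g⁻¹ c :=
  MonoidAlgebra.mapDomainLinearMap_single _ _ _

lemma mem_aug {V : Subgroup G} {u : G} (hu : u ∈ V) (h : MonoidAlgebra k G) :
    (single u (1:k) - 1) * h ∈ augIdealOf k G V :=
  Submodule.subset_span ⟨u, hu, h, rfl⟩

lemma aug_mono {V W : Subgroup G} (hVW : V ≤ W) :
    augIdealOf k G V ≤ augIdealOf k G W := by
  rw [augIdealOf, Submodule.span_le]
  rintro x ⟨u, hu, h, rfl⟩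
  exact mem_aug (hVW hu) h

lemma aug_mul_right {V : Subgroup G} {a : MonoidAlgebra k G}
    (ha : a ∈ augIdealOf k G V) (h : MonoidAlgebra k G) :
    a * h ∈ augIdealOf k G V := by
  have : augIdealOf k G V ≤
      Submodule.comap (LinearMap.mulRight k h) (augIdealOf k G V) := by
    rw [augIdealOf, Submodule.span_le]
    rintro x ⟨u, hu, h', rfl⟩
    simpa [mul_assoc, augIdealOf] using mem_aug (k := k) hu (h' * h)
  exact this ha


lemma aug_mul_left {V : Subgroup G} [hV : V.Normal] (h : MonoidAlgebra k G)
    {a : MonoidAlgebra k G} (ha : a ∈ augIdealOf k G V) :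
    h * a ∈ augIdealOf k G V := by
  have key : ∀ u ∈ V, ∀ h h' : MonoidAlgebra k G,
      h * ((single u (1:k) - 1) * h') ∈ augIdealOf k G V := by
    intro u hu h h'
    induction h using MonoidAlgebra.induction_linear with
    | zero => simpa using (augIdealOf k G V).zero_mem
    | add f g hf hg => rw [add_mul]; exact add_mem hf hg
    | single g c =>
        have heq : (single g c : MonoidAlgebra k G) * ((single u (1:k) - 1) * h')
            = (single (g * u * g⁻¹) (1:k) - 1) * (single g c * h') := by
          simp only [mul_sub, sub_mul, mul_one, one_mul, MonoidAlgebra.single_mul_single,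
            ← mul_assoc, inv_mul_cancel_right]
        rw [heq]
        exact mem_aug (hV.conj_mem u hu g) _
  have : augIdealOf k G V ≤
      Submodule.comap (LinearMap.mulLeft k h) (augIdealOf k G V) := by
    rw [augIdealOf, Submodule.span_le]
    rintro x ⟨u, hu, h', rfl⟩
    exact key u hu h h'
  exact this ha

lemma aug_counit {V : Subgroup G} {a : MonoidAlgebra k G}
    (ha : a ∈ augIdealOf k G V) : counitG k G a = 0 := by
  have : augIdealOf k G V ≤ LinearMap.ker (counitG k G).toLinearMap := by
    rw [augIdealOf, Submodule.span_le]
    rintro x ⟨u, hu, h, rfl⟩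
    simp [SetLike.mem_coe, LinearMap.mem_ker, map_mul, map_sub, counitG_single]
  exact this ha

lemma aug_antipode {V : Subgroup G} [hV : V.Normal] {a : MonoidAlgebra k G}
    (ha : a ∈ augIdealOf k G V) : antipodeG k G a ∈ augIdealOf k G V := by
  have : augIdealOf k G V ≤
      Submodule.comap (antipodeG k G) (augIdealOf k G V) := by
    rw [augIdealOf, Submodule.span_le]
    rintro x ⟨u, hu, h, rfl⟩
    simp only [SetLike.mem_coe, Submodule.mem_comap]
    induction h using MonoidAlgebra.induction_linear with
    | zero => simpa using (augIdealOf k G V).zero_mem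
    | add f g hf hg => rw [mul_add, map_add]; exact add_mem hf hg
    | single g c =>
        have h1 : (single u (1:k) - 1) * single g c
            = single (u*g) c - single g c := by
          rw [sub_mul, one_mul, MonoidAlgebra.single_mul_single, one_mul]
        have h2 : (antipodeG k G) (single (u*g) c - single g c)
            = (single (g⁻¹*u⁻¹*g) (1:k) - 1) * single g⁻¹ c := by
          rw [map_sub, antipodeG_single, antipodeG_single, sub_mul, one_mul,
            MonoidAlgebra.single_mul_single, one_mul, mul_inv_rev, mul_inv_cancel_right]
        rw [h1, h2]
        exact mem_aug (by simpa using hV.conj_mem u⁻¹ (inv_mem hu) g⁻¹) _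
  exact this ha


lemma range_tmul_left_mul {V : Subgroup G} {j : MonoidAlgebra k G} (x : MonoidAlgebra k G)
    (hj : j ∈ augIdealOf k G V) (w : MonoidAlgebra k G ⊗[k] MonoidAlgebra k G) :
    (j ⊗ₜ[k] x) * w ∈ LinearMap.range
      (TensorProduct.map (augIdealOf k G V).subtype
        (LinearMap.id (R := k) (M := MonoidAlgebra k G))) := by
  induction w using TensorProduct.induction_on with
  | zero => rw [mul_zero]; exact zero_mem _
  | tmul y z =>
      rw [Algebra.TensorProduct.tmul_mul_tmul]
      exact ⟨⟨j * y, aug_mul_right hj y⟩ ⊗ₜ[k] (x * z), rfl⟩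
  | add w₁ w₂ h1 h2 => rw [mul_add]; exact add_mem h1 h2

lemma range_tmul_right_mul {V : Subgroup G} {j : MonoidAlgebra k G} (x : MonoidAlgebra k G)
    (hj : j ∈ augIdealOf k G V) (w : MonoidAlgebra k G ⊗[k] MonoidAlgebra k G) :
    (x ⊗ₜ[k] j) * w ∈ LinearMap.range
      (TensorProduct.map (LinearMap.id (R := k) (M := MonoidAlgebra k G))
        (augIdealOf k G V).subtype) := by
  induction w using TensorProduct.induction_on with
  | zero => rw [mul_zero]; exact zero_mem _
  | tmul y z =>
      rw [Algebra.TensorProduct.tmul_mul_tmul]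
      exact ⟨(x * y) ⊗ₜ[k] ⟨j * z, aug_mul_right hj z⟩, rfl⟩
  | add w₁ w₂ h1 h2 => rw [mul_add]; exact add_mem h1 h2

lemma aug_comul {V : Subgroup G} [hV : V.Normal] {a : MonoidAlgebra k G}
    (ha : a ∈ augIdealOf k G V) :
    comulG k G a ∈
      LinearMap.range (TensorProduct.map (augIdealOf k G V).subtype LinearMap.id) ⊔
        LinearMap.range (TensorProduct.map LinearMap.id (augIdealOf k G V).subtype) := by
  have : augIdealOf k G V ≤ Submodule.comap (comulG k G).toLinearMap
      (LinearMap.range (TensorProduct.map (augIdealOf k G V).subtype LinearMap.id) ⊔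
        LinearMap.range (TensorProduct.map LinearMap.id (augIdealOf k G V).subtype)) := by
    rw [augIdealOf, Submodule.span_le]
    rintro x ⟨u, hu, h, rfl⟩
    simp only [SetLike.mem_coe, Submodule.mem_comap, AlgHom.toLinearMap_apply]
    rw [map_mul, map_sub, map_one]
    have hugen : single u (1:k) - 1 ∈ augIdealOf k G V := by
      simpa using mem_aug hu 1
    have hc : comulG k G (single u (1:k)) = single u (1:k) ⊗ₜ[k] single u (1:k) := by
      simpa using comulG_single u (1:k)
    have hsplit : (single u (1:k) ⊗ₜ[k] single u (1:k)
          - (1 : MonoidAlgebra k G ⊗[k] MonoidAlgebra k G))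
        = (single u (1:k) - 1) ⊗ₜ[k] single u (1:k)
          + (1 : MonoidAlgebra k G) ⊗ₜ[k] (single u (1:k) - 1) := by
      rw [Algebra.TensorProduct.one_def, TensorProduct.sub_tmul, TensorProduct.tmul_sub]
      abel
    rw [hc, hsplit, add_mul]
    exact add_mem
      (Submodule.mem_sup_left (range_tmul_left_mul _ hugen _))
      (Submodule.mem_sup_right (range_tmul_right_mul _ hugen _))
  exact this ha


lemma single_coeff_zero {J : Submodule k (MonoidAlgebra k G)}
    (hmulr : ∀ a ∈ J, ∀ h : MonoidAlgebra k G, a * h ∈ J)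
    (hcounit : ∀ a ∈ J, counitG k G a = 0)
    {x : G} {c : k} (h : single x c ∈ J) : c = 0 := by
  have h1 : (single x c : MonoidAlgebra k G) * single x⁻¹ (1:k) ∈ J := hmulr _ h _
  rw [MonoidAlgebra.single_mul_single, mul_one, mul_inv_cancel] at h1
  have h2 := hcounit _ h1
  rwa [counitG_single] at h2

lemma pair_coeff_zero {J : Submodule k (MonoidAlgebra k G)}
    (hmulr : ∀ a ∈ J, ∀ h : MonoidAlgebra k G, a * h ∈ J)
    (hcounit : ∀ a ∈ J, counitG k G a = 0)
    {x y : G} (hxy : x ≠ y) (hnot : single x (1:k) - single y 1 ∉ J)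
    {cx cy : k} (h : single x cx + single y cy ∈ J) : cx = 0 ∧ cy = 0 := by
  have he := hcounit _ h
  rw [map_add, counitG_single, counitG_single] at he
  have hcy : cy = -cx := eq_neg_of_add_eq_zero_right he
  have hx : (cx • (single x (1:k) - single y 1) : MonoidAlgebra k G)
      = single x cx + single y cy := by
    rw [hcy]
    simp [smul_sub, Finsupp.smul_single', sub_eq_add_neg, Finsupp.single_neg]
  by_cases hc : cx = 0
  · exact ⟨hc, by rw [hcy, hc, neg_zero]⟩
  · exfalso
    apply hnot
    have : (single x (1:k) - single y 1 : MonoidAlgebra k G)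
        = cx⁻¹ • (single x cx + single y cy) := by
      rw [← hx, smul_smul, inv_mul_cancel₀ hc, one_smul]
    rw [this]
    exact J.smul_mem _ h

lemma indep {J : Submodule k (MonoidAlgebra k G)}
    (hmulr : ∀ a ∈ J, ∀ h : MonoidAlgebra k G, a * h ∈ J)
    (hcounit : ∀ a ∈ J, counitG k G a = 0)
    (hcomul : ∀ a ∈ J, comulG k G a ∈
      LinearMap.range (TensorProduct.map J.subtype LinearMap.id) ⊔
        LinearMap.range (TensorProduct.map LinearMap.id J.subtype)) :
    ∀ (n : ℕ) (s : Finset G), s.card ≤ n →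
      (∀ x ∈ s, ∀ y ∈ s, x ≠ y → single x (1:k) - single y 1 ∉ J) →
      ∀ c : G → k, (∑ z ∈ s, single z (c z)) ∈ J → ∀ x ∈ s, c x = 0 := by
  classical
  intro n
  induction n with
  | zero =>
      intro s hs _ c _ x hx
      rw [Nat.le_zero, Finset.card_eq_zero] at hs
      simp [hs] at hx
  | succ n IH =>
      intro s hcard hpair c hsum x hx
      by_cases hle : s.card ≤ n
      · exact IH s hle hpair c hsum x hx
      push_neg at hle
      by_cases hone : s.card = 1
      · obtain ⟨a, rfl⟩ := Finset.card_eq_one.mp hone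
        rw [Finset.mem_singleton] at hx; subst hx
        rw [Finset.sum_singleton] at hsum
        exact single_coeff_zero hmulr hcounit hsum
      have hcard2 : 2 ≤ s.card := by omega
      have hne : (s.erase x).Nonempty := by
        rw [← Finset.card_pos, Finset.card_erase_of_mem hx]; omega
      obtain ⟨g', hg'⟩ := hne
      rw [Finset.mem_erase] at hg'
      obtain ⟨hg'x, hg's⟩ := hg'
      have hxg' : x ≠ g' := fun h => hg'x h.symm
      set t := s.erase g' with ht
      have hxt : x ∈ t := Finset.mem_erase.mpr ⟨hxg', hx⟩
      have htcard : t.card ≤ n := by rw [ht, Finset.card_erase_of_mem hg's]; omega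
      have hpt : ∀ z ∈ t, ∀ w ∈ t, z ≠ w → single z (1:k) - single w 1 ∉ J :=
        fun z hz w hw => hpair z (Finset.mem_of_mem_erase hz) w (Finset.mem_of_mem_erase hw)
      set v : {z // z ∈ t} → (MonoidAlgebra k G ⧸ J) :=
        fun z => J.mkQ (single (z : G) (1:k)) with hv
      have hli : LinearIndependent k v := by
        rw [Fintype.linearIndependent_iff]
        intro l hl i
        set c' : G → k := fun z => if hz : z ∈ t then l ⟨z, hz⟩ else 0 with hc'
        have h0 : ∑ i : {z // z ∈ t}, l i • v i
            = J.mkQ (∑ i : {z // z ∈ t}, single (i : G) (l i)) := by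
          rw [map_sum]
          refine Finset.sum_congr rfl fun j _ => ?_
          rw [hv, ← map_smul]
          congr 1
          rw [MonoidAlgebra.smul_single, smul_eq_mul, mul_one]
        rw [h0] at hl
        have h1 : (∑ i : {z // z ∈ t}, single (i : G) (l i)) ∈ J := by
          rwa [Submodule.mkQ_apply, Submodule.Quotient.mk_eq_zero] at hl
        have h2 : (∑ i : {z // z ∈ t}, single (i : G) (l i))
            = ∑ z ∈ t, single z (c' z) := by
          rw [← Finset.sum_coe_sort t (fun z => single z (c' z))]
          refine Finset.sum_congr rfl fun j _ => ?_
          rw [hc']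
          simp [j.2]
        rw [h2] at h1
        have h3 := IH t htcard hpt c' h1 (i : G) i.2
        rw [hc'] at h3
        simpa [i.2] using h3
      obtain ⟨q, hq⟩ := Submodule.exists_isCompl (Submodule.span k (Set.range v))
      set B := Module.Basis.span hli with hB
      set i₀ : {z // z ∈ t} := ⟨x, hxt⟩ with hi₀
      set φ : MonoidAlgebra k G →ₗ[k] k :=
        (B.coord i₀) ∘ₗ
          ((Submodule.span k (Set.range v)).linearProjOfIsCompl q hq) ∘ₗ J.mkQ with hφ
      have hφJ : ∀ a ∈ J, φ a = 0 := by
        intro a ha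
        have hmk : J.mkQ a = 0 := by
          rwa [Submodule.mkQ_apply, Submodule.Quotient.mk_eq_zero]
        rw [hφ, LinearMap.comp_apply, LinearMap.comp_apply, hmk, map_zero, map_zero]
      have hφt : ∀ i : {z // z ∈ t}, φ (single (i : G) (1:k)) = if i = i₀ then 1 else 0 := by
        intro i
        have hvmem : v i ∈ Submodule.span k (Set.range v) := Submodule.subset_span ⟨i, rfl⟩
        have h1 : φ (single (i : G) (1:k))
            = B.coord i₀ ((Submodule.span k (Set.range v)).linearProjOfIsCompl q hq (v i)) := rfl
        have h2 : ((Submodule.span k (Set.range v)).linearProjOfIsCompl q hq) (v i)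
            = ⟨v i, hvmem⟩ := by
          conv_lhs => rw [show v i
            = ((⟨v i, hvmem⟩ : Submodule.span k (Set.range v)) : MonoidAlgebra k G ⧸ J) from rfl]
          exact Submodule.linearProjOfIsCompl_apply_left hq _
        have h3 : (⟨v i, hvmem⟩ : Submodule.span k (Set.range v)) = B i :=
          (Module.Basis.span_apply hli i).symm
        rw [h1, h2, h3, Module.Basis.coord_apply, Module.Basis.repr_self, Finsupp.single_apply]
      set ψ : MonoidAlgebra k G ⊗[k] MonoidAlgebra k G →ₗ[k] MonoidAlgebra k G :=
        TensorProduct.lift ((LinearMap.lsmul k (MonoidAlgebra k G)) ∘ₗ φ) with hψ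
      have hψ_tmul : ∀ a b : MonoidAlgebra k G, ψ (a ⊗ₜ[k] b) = φ a • b := by
        intro a b
        rw [hψ, TensorProduct.lift.tmul]
        rfl
      have hz1 : ∀ y₁, ψ (TensorProduct.map J.subtype LinearMap.id y₁) = 0 := by
        intro y₁
        induction y₁ using TensorProduct.induction_on with
        | zero => simp
        | tmul a b => simp [hψ_tmul, hφJ (a : MonoidAlgebra k G) a.2]
        | add a b ha hb => rw [map_add, map_add, ha, hb, add_zero]
      have hz2 : ∀ y₂, ψ (TensorProduct.map LinearMap.id J.subtype y₂) ∈ J := by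
        intro y₂
        induction y₂ using TensorProduct.induction_on with
        | zero => rw [map_zero, map_zero]; exact J.zero_mem
        | tmul a b =>
            rw [TensorProduct.map_tmul]
            simp only [LinearMap.id_coe, id_eq, Submodule.coe_subtype]
            rw [hψ_tmul]
            exact J.smul_mem _ b.2
        | add a b ha hb => rw [map_add, map_add]; exact J.add_mem ha hb
      have hψJ : ψ (comulG k G (∑ z ∈ s, single z (c z))) ∈ J := by
        obtain ⟨w₁, hw₁, w₂, hw₂, hw⟩ := Submodule.mem_sup.mp (hcomul _ hsum)
        obtain ⟨y₁, rfl⟩ := hw₁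
        obtain ⟨y₂, rfl⟩ := hw₂
        rw [← hw, map_add, hz1, zero_add]
        exact hz2 _
      have hcomp : ψ (comulG k G (∑ z ∈ s, single z (c z)))
          = ∑ z ∈ s, (c z * φ (single z (1:k))) • single z (1:k) := by
        rw [map_sum, map_sum]
        refine Finset.sum_congr rfl fun z _ => ?_
        rw [comulG_single, map_smul, hψ_tmul, smul_smul]
      have hx1 : φ (single x (1:k)) = 1 := by
        have := hφt i₀
        rwa [if_pos rfl] at this
      have hsplit : ∑ z ∈ s, (c z * φ (single z (1:k))) • single z (1:k)
          = single g' (c g' * φ (single g' (1:k))) + single x (c x) := by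
        rw [← Finset.insert_erase hg's,
          Finset.sum_insert (Finset.notMem_erase g' s), ← ht,
          ← Finset.add_sum_erase t _ hxt]
        have hzero : ∑ z ∈ t.erase x, (c z * φ (single z (1:k))) • single z (1:k) = 0 := by
          refine Finset.sum_eq_zero fun z hz => ?_
          rw [Finset.mem_erase] at hz
          have hφz : φ (single z (1:k)) = 0 := by
            have := hφt ⟨z, hz.2⟩
            rwa [if_neg (fun h => hz.1 (congrArg Subtype.val h))] at this
          rw [hφz, mul_zero, zero_smul]
        rw [hzero, add_zero, hx1]
        simp [Finsupp.smul_single']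
      have hfin : single g' (c g' * φ (single g' (1:k))) + single x (c x) ∈ J := by
        have h5 := hψJ
        rwa [hcomp, hsplit] at h5
      exact (pair_coeff_zero hmulr hcounit (fun h => hg'x h)
        (hpair g' hg's x hx (fun h => hg'x h)) hfin).2


open scoped Classical in
lemma aug_counit_coset {V : Subgroup G} {a : MonoidAlgebra k G}
    (ha : a ∈ augIdealOf k G V) :
    (Finsupp.linearCombination k (fun g : G => if g ∈ V then (1:k) else 0) ∘ₗ
      (MonoidAlgebra.coeffLinearEquiv k).toLinearMap) a = 0 := by
  have : augIdealOf k G V ≤ LinearMap.ker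
      (Finsupp.linearCombination k (fun g : G => if g ∈ V then (1:k) else 0) ∘ₗ
        (MonoidAlgebra.coeffLinearEquiv k).toLinearMap) := by
    rw [augIdealOf, Submodule.span_le]
    rintro x ⟨u, hu, h, rfl⟩
    simp only [SetLike.mem_coe, LinearMap.mem_ker]
    induction h using MonoidAlgebra.induction_linear with
    | zero => simp
    | add f g hf hg => rw [mul_add, map_add, hf, hg, add_zero]
    | single g c =>
        rw [sub_mul, one_mul, MonoidAlgebra.single_mul_single, one_mul, map_sub]
        simp [Finsupp.linearCombination_single, MonoidAlgebra.coeffLinearEquiv, mul_mem_cancel_left hu]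
  exact this ha

lemma single_sub_one_mem_aug {V : Subgroup G} {g : G}
    (h : single g (1:k) - 1 ∈ augIdealOf k G V) : g ∈ V := by
  by_contra hg
  have h0 := aug_counit_coset h
  rw [MonoidAlgebra.one_def, map_sub] at h0
  simp [Finsupp.linearCombination_single, MonoidAlgebra.coeffLinearEquiv] at h0
  simp [hg, V.one_mem] at h0

end Helpers

/-- **The core Hopf ideal of a subgroup pair.**  Let `U ≤ G` be finite groups,
`H = kG`, `R = kU`, `Q = H/R⁺H` the permutation module on right cosets, and
`N = U.normalCore` the core of `U` in `G`.  Then `kN⁺H` is the maximal Hopf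
ideal contained in the annihilator of the `H`-module `Q` (`a` annihilates `Q`
iff `h·a ∈ R⁺H` for all `h ∈ H`). -/
theorem core_hopf_ideal_of_subgroup [Finite G] :
    IsHopfIdeal k G (augIdealOf k G U.normalCore) ∧
    (∀ a ∈ augIdealOf k G U.normalCore,
      ∀ h : MonoidAlgebra k G, h * a ∈ augIdealOf k G U) ∧
    (∀ J : Submodule k (MonoidAlgebra k G), IsHopfIdeal k G J →
      (∀ a ∈ J, ∀ h : MonoidAlgebra k G, h * a ∈ augIdealOf k G U) →
      J ≤ augIdealOf k G U.normalCore) := by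
  classical
  refine ⟨⟨fun a ha h => ⟨aug_mul_left h ha, aug_mul_right ha h⟩,
      fun a ha => aug_counit ha, fun a ha => aug_comul ha, fun a ha => aug_antipode ha⟩,
    fun a ha h => aug_mono U.normalCore_le (aug_mul_left h ha), ?_⟩
  intro J hJ hann
  obtain ⟨hJmul, hJcounit, hJcomul, -⟩ := hJ
  have hJmulr : ∀ a ∈ J, ∀ h : MonoidAlgebra k G, a * h ∈ J :=
    fun a ha h => (hJmul a ha h).2
  -- the subgroup of group-likes congruent to 1 mod J
  set N' : Subgroup G :=
    { carrier := {g : G | single g (1:k) - 1 ∈ J}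
      one_mem' := by
        show single (1:G) (1:k) - 1 ∈ J
        rw [← MonoidAlgebra.one_def, sub_self]
        exact J.zero_mem
      mul_mem' := by
        intro a b ha hb
        have h1 : (single a (1:k) - 1) * single b (1:k) ∈ J := hJmulr _ ha _
        show single (a*b) (1:k) - 1 ∈ J
        have heq : single (a*b) (1:k) - 1
            = (single a (1:k) - 1) * single b (1:k) + (single b (1:k) - 1) := by
          rw [sub_mul, one_mul, MonoidAlgebra.single_mul_single, mul_one]
          abel
        rw [heq]
        exact J.add_mem h1 hb
      inv_mem' := by
        intro a ha
        have h1 : (single a⁻¹ (1:k)) * (single a (1:k) - 1) ∈ J := (hJmul _ ha _).1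
        show single a⁻¹ (1:k) - 1 ∈ J
        have heq : single a⁻¹ (1:k) - 1
            = -(single a⁻¹ (1:k) * (single a (1:k) - 1)) := by
          rw [mul_sub, mul_one, MonoidAlgebra.single_mul_single, mul_one, inv_mul_cancel,
            ← MonoidAlgebra.one_def]
          abel
        rw [heq]
        exact J.neg_mem h1 } with hN'
  have hN'U : N' ≤ U := by
    intro g hg
    have hij : single g (1:k) - 1 ∈ augIdealOf k G U := by
      have := hann _ (show single g (1:k) - 1 ∈ J from hg) 1
      rwa [one_mul] at this
    exact single_sub_one_mem_aug hij
  have hN'norm : N'.Normal := by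
    constructor
    intro n hn g
    show single (g*n*g⁻¹) (1:k) - 1 ∈ J
    have h1 : single g (1:k) * (single n (1:k) - 1) * single g⁻¹ (1:k) ∈ J :=
      hJmulr _ ((hJmul _ (show single n (1:k) - 1 ∈ J from hn) _).1) _
    have heq : single (g*n*g⁻¹) (1:k) - 1
        = single g (1:k) * (single n (1:k) - 1) * single g⁻¹ (1:k) := by
      simp [mul_sub, sub_mul, MonoidAlgebra.single_mul_single, MonoidAlgebra.one_def]
    rw [heq]
    exact h1
  haveI := hN'norm
  have hN'core : N' ≤ U.normalCore := Subgroup.normal_le_normalCore.mpr hN'U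
  -- coset representatives
  intro a ha
  set r : G → G := fun g => (Quotient.mk (QuotientGroup.rightRel N') g).out with hr
  have hrel : ∀ g : G, g * (r g)⁻¹ ∈ N' := by
    intro g
    have h2 := Quotient.exact ((Quotient.mk (QuotientGroup.rightRel N') g).out_eq)
    exact QuotientGroup.rightRel_apply.mp h2
  have hrr : ∀ g₁ g₂ : G, r g₁ ≠ r g₂ → single (r g₁) (1:k) - single (r g₂) 1 ∉ J := by
    intro g₁ g₂ hne hmem
    apply hne
    have h1 : (single (r g₁) (1:k) - single (r g₂) 1) * single (r g₂)⁻¹ (1:k) ∈ J :=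
      hJmulr _ hmem _
    have heq : (single (r g₁) (1:k) - single (r g₂) 1) * single (r g₂)⁻¹ (1:k)
        = single (r g₁ * (r g₂)⁻¹) (1:k) - 1 := by
      simp only [sub_mul, MonoidAlgebra.single_mul_single, one_mul, mul_inv_cancel,
        ← MonoidAlgebra.one_def]
    rw [heq] at h1
    have hsound : (Quotient.mk (QuotientGroup.rightRel N') (r g₂))
        = Quotient.mk (QuotientGroup.rightRel N') (r g₁) :=
      Quotient.sound (QuotientGroup.rightRel_apply.mpr h1)
    have e1 := (Quotient.mk (QuotientGroup.rightRel N') g₁).out_eq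
    have e2 := (Quotient.mk (QuotientGroup.rightRel N') g₂).out_eq
    rw [hr]
    simp only
    rw [show (Quotient.mk (QuotientGroup.rightRel N') g₁)
        = Quotient.mk (QuotientGroup.rightRel N') g₂ from by
      rw [← e1, ← e2, hsound]]
  set ρ : MonoidAlgebra k G →ₗ[k] MonoidAlgebra k G := MonoidAlgebra.mapDomainLinearMap k k r with hρ
  have hsub : ∀ b : MonoidAlgebra k G,
      b - ρ b ∈ augIdealOf k G N' ∧ b - ρ b ∈ J := by
    intro b
    induction b using MonoidAlgebra.induction_on with
    | of g =>
        have hmap : ρ (of k G g) = single (r g) (1:k) :=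
          MonoidAlgebra.mapDomainLinearMap_single _ _ _
        have heq : (of k G g : MonoidAlgebra k G) - ρ (of k G g)
            = (single (g * (r g)⁻¹) (1:k) - 1) * single (r g) (1:k) := by
          rw [hmap]
          simp only [MonoidAlgebra.of_apply, sub_mul, one_mul,
            MonoidAlgebra.single_mul_single, inv_mul_cancel_right]
        rw [heq]
        exact ⟨mem_aug (hrel g) _,
          hJmulr _ (show single (g * (r g)⁻¹) (1:k) - 1 ∈ J from hrel g) _⟩
    | add f g hf hg =>
        have heq : (f + g) - ρ (f + g) = (f - ρ f) + (g - ρ g) := by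
          rw [map_add]; abel
        rw [heq]
        exact ⟨add_mem hf.1 hg.1, J.add_mem hf.2 hg.2⟩
    | smul c f hf =>
        have heq : (c • f) - ρ (c • f) = c • (f - ρ f) := by
          rw [map_smul, smul_sub]
        rw [heq]
        exact ⟨Submodule.smul_mem _ _ hf.1, J.smul_mem _ hf.2⟩
  have hρJ : ρ a ∈ J := by
    have heq : ρ a = a - (a - ρ a) := by abel
    rw [heq]
    exact J.sub_mem ha (hsub a).2
  have hpair : ∀ x ∈ (ρ a).coeff.support, ∀ y ∈ (ρ a).coeff.support, x ≠ y →
      single x (1:k) - single y 1 ∉ J := by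
    intro x hxs y hys hxy
    have hxr := Finsupp.mapDomain_support hxs
    have hyr := Finsupp.mapDomain_support hys
    rw [Finset.mem_image] at hxr hyr
    obtain ⟨g₁, -, rfl⟩ := hxr
    obtain ⟨g₂, -, rfl⟩ := hyr
    exact hrr g₁ g₂ hxy
  have hall : ∀ x ∈ (ρ a).coeff.support, (ρ a).coeff x = 0 := by
    have hsum : (∑ z ∈ (ρ a).coeff.support, single z ((ρ a).coeff z)) ∈ J := by
      have heq : (∑ z ∈ (ρ a).coeff.support, single z ((ρ a).coeff z)) = ρ a := by
        conv_rhs => rw [← MonoidAlgebra.sum_coeff_single (ρ a)]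
        rw [Finsupp.sum]
      rwa [heq]
    exact fun x hxs =>
      indep hJmulr hJcounit hJcomul (ρ a).coeff.support.card (ρ a).coeff.support le_rfl hpair
        (fun z => (ρ a).coeff z) hsum x hxs
  have hρ0 : ρ a = 0 := by
    ext g
    by_cases hg : g ∈ (ρ a).coeff.support
    · exact hall g hg
    · exact Finsupp.notMem_support_iff.mp hg
  have hfin : a ∈ augIdealOf k G N' := by
    have := (hsub a).1
    rwa [hρ0, sub_zero] at this
  exact aug_mono hN'core hfin
end

section
/- Two ring extensions A ⊇ B and R ⊇ S are Morita equivalent (there exist Morita bimodules P between A and R and Q between B and S with Q ⊗_S R ≅ P as B-R-bimodules) if and only if A ⊗_B Q ≅ P as A-S-bimodules. -/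
set_option linter.unusedSectionVars false
set_option maxHeartbeats 1000000


open TensorProduct MulOpposite

universe u

variable {A B R S : Type u} [Ring A] [Ring B] [Ring R] [Ring S]
  (f : B →+* A) (g : S →+* R)
  (P : Type u) [AddCommGroup P] [Module A P] [Module Rᵐᵒᵖ P]
    [SMulCommClass A Rᵐᵒᵖ P]
  (Pd : Type u) [AddCommGroup Pd] [Module R Pd] [Module Aᵐᵒᵖ Pd]
    [SMulCommClass R Aᵐᵒᵖ Pd]
  (Q : Type u) [AddCommGroup Q] [Module B Q] [Module Sᵐᵒᵖ Q]
    [SMulCommClass B Sᵐᵒᵖ Q]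
  (Qd : Type u) [AddCommGroup Qd] [Module S Qd] [Module Bᵐᵒᵖ Qd]
    [SMulCommClass S Bᵐᵒᵖ Qd]

section Infra
variable {M N H : Type u} [AddCommGroup M] [AddCommGroup N] [AddCommGroup H]
noncomputable def quotLift (s : Set (M ⊗[ℤ] N)) (b : M →+ N →+ H)
    (hb : ∀ z ∈ s, TensorProduct.liftAddHom b
      (fun z m n => by simp [map_zsmul]) z = 0) :
    ((M ⊗[ℤ] N) ⧸ Submodule.span ℤ s) →+ H :=
  (Submodule.liftQ _ (TensorProduct.liftAddHom b
      (fun z m n => by simp [map_zsmul])).toIntLinearMap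
    (by
      rw [Submodule.span_le]
      intro z hz
      simpa using hb z hz)).toAddMonoidHom
@[simp] lemma quotLift_mk (s : Set (M ⊗[ℤ] N)) (b : M →+ N →+ H) (hb)
    (m : M) (n : N) :
    quotLift s b hb (Submodule.Quotient.mk (m ⊗ₜ[ℤ] n)) = b m n := by
  simp [quotLift]
lemma quot_addHom_ext {s : Set (M ⊗[ℤ] N)}
    (F G : ((M ⊗[ℤ] N) ⧸ Submodule.span ℤ s) →+ H)
    (h : ∀ m n, F (Submodule.Quotient.mk (m ⊗ₜ[ℤ] n))
      = G (Submodule.Quotient.mk (m ⊗ₜ[ℤ] n))) : F = G := by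
  ext x
  obtain ⟨t, rfl⟩ := Submodule.Quotient.mk_surjective _ x
  induction t using TensorProduct.induction_on with
  | zero => simp [Submodule.Quotient.mk_zero]
  | tmul m n => exact h m n
  | add x y hx hy =>
      rw [Submodule.Quotient.mk_add, map_add, map_add, hx, hy]
lemma quot_exists_list {s : Set (M ⊗[ℤ] N)}
    (x : (M ⊗[ℤ] N) ⧸ Submodule.span ℤ s) :
    ∃ l : List (M × N),
      x = (l.map fun c => (Submodule.Quotient.mk (c.1 ⊗ₜ[ℤ] c.2) :
        (M ⊗[ℤ] N) ⧸ Submodule.span ℤ s)).sum := by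
  obtain ⟨t, rfl⟩ := Submodule.Quotient.mk_surjective _ x
  induction t using TensorProduct.induction_on with
  | zero => exact ⟨[], by simp [Submodule.Quotient.mk_zero]⟩
  | tmul m n => exact ⟨[(m, n)], by simp⟩
  | add x y hx hy =>
      obtain ⟨l₁, h₁⟩ := hx
      obtain ⟨l₂, h₂⟩ := hy
      exact ⟨l₁ ++ l₂, by
        rw [Submodule.Quotient.mk_add, h₁, h₂, List.map_append, List.sum_append]⟩
def mkBiadd (b : M → N → H)
    (h1 : ∀ m m' n, b (m + m') n = b m n + b m' n)
    (h2 : ∀ m n n', b m (n + n') = b m n + b m n') : M →+ N →+ H :=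
  AddMonoidHom.mk' (fun m => AddMonoidHom.mk' (b m) (h2 m))
    (fun m m' => by ext n; exact h1 m m' n)
@[simp] lemma mkBiadd_apply (b : M → N → H) (h1 h2) (m : M) (n : N) :
    mkBiadd b h1 h2 m n = b m n := rfl
lemma list_sum_map_add {ι : Type*} (l : List ι) (F G : ι → H) :
    (l.map fun i => F i + G i).sum = (l.map F).sum + (l.map G).sum := by
  induction l with
  | nil => simp
  | cons a l ih => simp [ih]; abel
lemma list_sum_map_smul_const {T : Type u} [Ring T] [Module T H]
    (l : List T) (m : H) :
    (l.map fun t => t • m).sum = l.sum • m := by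
  induction l with
  | nil => simp
  | cons a l ih => simp [ih, add_smul]

lemma list_sum_congr {ι : Type*} {l : List ι} {F G : ι → H}
    (h : ∀ c ∈ l, F c = G c) : (l.map F).sum = (l.map G).sum := by
  rw [List.map_congr_left h]

lemma list_sum_pull {K : Type u} [AddCommGroup K] (F : H →+ K) {ι : Type*}
    (l : List ι) (G : ι → H) :
    (l.map fun c => F (G c)).sum = F (l.map G).sum := by
  rw [map_list_sum, List.map_map]; rfl

lemma list_sum_pull' {K : Type u} [AddCommGroup K] (φ : H → K)
    (h0 : φ 0 = 0) (hadd : ∀ x y, φ (x + y) = φ x + φ y) {ι : Type*}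
    (l : List ι) (G : ι → H) :
    (l.map fun c => φ (G c)).sum = φ (l.map G).sum := by
  induction l with
  | nil => simp [h0]
  | cons a l ih => simp [hadd, ih]
end Infra


/-- The tensor product `M ⊗_T N` of a right `T`-module and a left `T`-module
over a (possibly noncommutative) ring `T`, as a quotient of `M ⊗_ℤ N`. -/
noncomputable def NCT (T M N : Type u) [Ring T] [AddCommGroup M]
    [Module Tᵐᵒᵖ M] [AddCommGroup N] [Module T N] : Type u :=
  (M ⊗[ℤ] N) ⧸ Submodule.span ℤ
    {z : M ⊗[ℤ] N | ∃ (t : T) (m : M) (n : N),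
      z = (op t • m) ⊗ₜ[ℤ] n - m ⊗ₜ[ℤ] (t • n)}

noncomputable instance (T M N : Type u) [Ring T] [AddCommGroup M]
    [Module Tᵐᵒᵖ M] [AddCommGroup N] [Module T N] :
    AddCommGroup (NCT T M N) :=
  inferInstanceAs (AddCommGroup ((M ⊗[ℤ] N) ⧸ Submodule.span ℤ _))

/-- The class of the simple tensor `m ⊗ n` in `M ⊗_T N`. -/
noncomputable def ncmk (T M N : Type u) [Ring T] [AddCommGroup M]
    [Module Tᵐᵒᵖ M] [AddCommGroup N] [Module T N] (m : M) (n : N) :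
    NCT T M N :=
  Submodule.Quotient.mk (m ⊗ₜ[ℤ] n)

section NCTlemmas
variable (T M N : Type u) [Ring T] [AddCommGroup M]
    [Module Tᵐᵒᵖ M] [AddCommGroup N] [Module T N]
variable {H : Type u} [AddCommGroup H]

noncomputable def nctLift (b : M →+ N →+ H)
    (hb : ∀ (t : T) m n, b (op t • m) n = b m (t • n)) : NCT T M N →+ H :=
  quotLift _ b (by
    rintro z ⟨t, m, n, rfl⟩
    simp [map_sub, hb])

@[simp] lemma nctLift_mk (b : M →+ N →+ H) (hb) (m : M) (n : N) :
    nctLift T M N b hb (ncmk T M N m n) = b m n :=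
  quotLift_mk _ b _ m n

lemma nct_ext (F G : NCT T M N →+ H)
    (h : ∀ m n, F (ncmk T M N m n) = G (ncmk T M N m n)) : F = G :=
  quot_addHom_ext F G h

lemma nct_exists_list (x : NCT T M N) :
    ∃ l : List (M × N), x = (l.map fun c => ncmk T M N c.1 c.2).sum :=
  quot_exists_list x

variable {T M N}

lemma ncmk_rel (t : T) (m : M) (n : N) :
    ncmk T M N (op t • m) n = ncmk T M N m (t • n) := by
  unfold ncmk
  erw [Submodule.Quotient.eq]
  exact Submodule.subset_span ⟨t, m, n, rfl⟩

@[simp] lemma ncmk_add_left (m m' : M) (n : N) :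
    ncmk T M N (m + m') n = ncmk T M N m n + ncmk T M N m' n := by
  unfold ncmk; rw [TensorProduct.add_tmul, Submodule.Quotient.mk_add]; rfl

@[simp] lemma ncmk_add_right (m : M) (n n' : N) :
    ncmk T M N m (n + n') = ncmk T M N m n + ncmk T M N m n' := by
  unfold ncmk; rw [TensorProduct.tmul_add, Submodule.Quotient.mk_add]; rfl

@[simp] lemma ncmk_zero_left (n : N) : ncmk T M N 0 n = 0 := by
  unfold ncmk; rw [TensorProduct.zero_tmul, Submodule.Quotient.mk_zero]; rfl

@[simp] lemma ncmk_zero_right (m : M) : ncmk T M N m 0 = 0 := by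
  unfold ncmk; rw [TensorProduct.tmul_zero, Submodule.Quotient.mk_zero]; rfl

end NCTlemmas

section Pairing

variable {T₁ T₂ M N : Type u} [Ring T₁] [Ring T₂]
  [AddCommGroup M] [Module T₁ M] [Module T₂ᵐᵒᵖ M] [SMulCommClass T₁ T₂ᵐᵒᵖ M]
  [AddCommGroup N] [Module T₂ N] [Module T₁ᵐᵒᵖ N] [SMulCommClass T₂ T₁ᵐᵒᵖ N]

/-- left action of `a : T₁` on `M ⊗_{T₂} N`. -/
noncomputable def actL (a : T₁) : NCT T₂ M N →+ NCT T₂ M N :=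
  nctLift T₂ M N (mkBiadd (fun m n => ncmk T₂ M N (a • m) n)
      (fun m m' n => by simp [smul_add])
      (fun m n n' => by simp))
    (fun t m n => by
      simp only [mkBiadd_apply]
      rw [smul_comm, ncmk_rel])

@[simp] lemma actL_mk (a : T₁) (m : M) (n : N) :
    actL a (ncmk T₂ M N m n) = ncmk T₂ M N (a • m) n := by
  simp [actL]

/-- right action of `a : T₁` on `M ⊗_{T₂} N` (with `N` a right `T₁`-module). -/
noncomputable def actR (a : T₁) : NCT T₂ M N →+ NCT T₂ M N :=
  nctLift T₂ M N (mkBiadd (fun m n => ncmk T₂ M N m (op a • n))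
      (fun m m' n => by simp)
      (fun m n n' => by simp [smul_add]))
    (fun t m n => by
      simp only [mkBiadd_apply]
      rw [ncmk_rel, smul_comm])

@[simp] lemma actR_mk (a : T₁) (m : M) (n : N) :
    actR a (ncmk T₂ M N m n) = ncmk T₂ M N m (op a • n) := by
  simp [actR]

/-- A Morita pair: mutually inverse bimodule pairings between `M ⊗_{T₂} N` and
`T₁`, and `N ⊗_{T₁} M` and `T₂`, together with chosen dual bases. -/
structure MoritaPair where
  Pa : NCT T₂ M N ≃+ T₁
  Pb : NCT T₁ N M ≃+ T₂
  hPa1 : ∀ (a : T₁) (m : M) (n : N),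
    Pa (ncmk T₂ M N (a • m) n) = a * Pa (ncmk T₂ M N m n)
  hPa2 : ∀ (a : T₁) (m : M) (n : N),
    Pa (ncmk T₂ M N m (op a • n)) = Pa (ncmk T₂ M N m n) * a
  hPb1 : ∀ (r : T₂) (n : N) (m : M),
    Pb (ncmk T₁ N M (r • n) m) = r * Pb (ncmk T₁ N M n m)
  hPb2 : ∀ (r : T₂) (n : N) (m : M),
    Pb (ncmk T₁ N M n (op r • m)) = Pb (ncmk T₁ N M n m) * r
  LA : List (M × N)
  hLA : (LA.map fun c => ncmk T₂ M N c.1 c.2).sum = Pa.symm 1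
  LB : List (N × M)
  hLB : (LB.map fun c => ncmk T₁ N M c.1 c.2).sum = Pb.symm 1

namespace MoritaPair

variable (C : MoritaPair (T₁ := T₁) (T₂ := T₂) (M := M) (N := N))

lemma Pa_actL (a : T₁) (x : NCT T₂ M N) : C.Pa (actL a x) = a * C.Pa x := by
  have h : (C.Pa.toAddMonoidHom.comp (actL a))
      = (AddMonoidHom.mulLeft a).comp C.Pa.toAddMonoidHom := by
    apply nct_ext
    intro m n
    simpa using C.hPa1 a m n
  exact DFunLike.congr_fun h x

lemma Pa_actR (a : T₁) (x : NCT T₂ M N) : C.Pa (actR a x) = C.Pa x * a := by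
  have h : (C.Pa.toAddMonoidHom.comp (actR a))
      = (AddMonoidHom.mulRight a).comp C.Pa.toAddMonoidHom := by
    apply nct_ext
    intro m n
    simpa using C.hPa2 a m n
  exact DFunLike.congr_fun h x

lemma Pb_actL (r : T₂) (x : NCT T₁ N M) : C.Pb (actL r x) = r * C.Pb x := by
  have h : (C.Pb.toAddMonoidHom.comp (actL r))
      = (AddMonoidHom.mulLeft r).comp C.Pb.toAddMonoidHom := by
    apply nct_ext
    intro n m
    simpa using C.hPb1 r n m
  exact DFunLike.congr_fun h x

lemma Pb_actR (r : T₂) (x : NCT T₁ N M) : C.Pb (actR r x) = C.Pb x * r := by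
  have h : (C.Pb.toAddMonoidHom.comp (actR r))
      = (AddMonoidHom.mulRight r).comp C.Pb.toAddMonoidHom := by
    apply nct_ext
    intro n m
    simpa using C.hPb2 r n m
  exact DFunLike.congr_fun h x

lemma symm_mul_left (a x : T₁) : C.Pa.symm (a * x) = actL a (C.Pa.symm x) := by
  apply C.Pa.injective
  rw [C.Pa_actL, C.Pa.apply_symm_apply, C.Pa.apply_symm_apply]

lemma symm_mul_right (a x : T₁) : C.Pa.symm (x * a) = actR a (C.Pa.symm x) := by
  apply C.Pa.injective
  rw [C.Pa_actR, C.Pa.apply_symm_apply, C.Pa.apply_symm_apply]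

lemma symm_mul_left' (r x : T₂) : C.Pb.symm (r * x) = actL r (C.Pb.symm x) := by
  apply C.Pb.injective
  rw [C.Pb_actL, C.Pb.apply_symm_apply, C.Pb.apply_symm_apply]

lemma symm_mul_right' (r x : T₂) : C.Pb.symm (x * r) = actR r (C.Pb.symm x) := by
  apply C.Pb.injective
  rw [C.Pb_actR, C.Pb.apply_symm_apply, C.Pb.apply_symm_apply]

/-- `d(m) = Σ Pa(m ⊗ x_j) • y_j`. -/
noncomputable def dd : M →+ M :=
  AddMonoidHom.mk'
    (fun m => (C.LB.map fun c => C.Pa (ncmk T₂ M N m c.1) • c.2).sum)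
    (fun m m' => by
      rw [← list_sum_map_add]
      apply list_sum_congr
      intro c _
      rw [ncmk_add_left, map_add, add_smul])

/-- `j(m) = Σ p_i • Pb(p'_i ⊗ m)`. -/
noncomputable def jj : M →+ M :=
  AddMonoidHom.mk'
    (fun m => (C.LA.map fun c => op (C.Pb (ncmk T₁ N M c.2 m)) • c.1).sum)
    (fun m m' => by
      rw [← list_sum_map_add]
      apply list_sum_congr
      intro c _
      rw [ncmk_add_right, map_add, op_add, add_smul])

lemma dd_apply (m : M) :
    C.dd m = (C.LB.map fun c => C.Pa (ncmk T₂ M N m c.1) • c.2).sum := rfl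

lemma jj_apply (m : M) :
    C.jj m = (C.LA.map fun c => op (C.Pb (ncmk T₁ N M c.2 m)) • c.1).sum := rfl

/-- Contraction map `Λ_m : N ⊗_{T₁} M →+ M`, `n ⊗ m' ↦ Pa(m ⊗ n) • m'`. -/
noncomputable def Lam (m : M) : NCT T₁ N M →+ M :=
  nctLift T₁ N M (mkBiadd (fun n m' => C.Pa (ncmk T₂ M N m n) • m')
      (fun n n' m' => by simp [add_smul])
      (fun n m' m'' => by simp [smul_add]))
    (fun a n m' => by
      simp only [mkBiadd_apply]
      rw [C.hPa2, mul_smul])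

@[simp] lemma Lam_mk (m : M) (n : N) (m' : M) :
    C.Lam m (ncmk T₁ N M n m') = C.Pa (ncmk T₂ M N m n) • m' := by
  simp [Lam]

/-- Contraction map `Γ_m : M ⊗_{T₂} N →+ M`, `m' ⊗ n ↦ m' • Pb(n ⊗ m)`. -/
noncomputable def Gam (m : M) : NCT T₂ M N →+ M :=
  nctLift T₂ M N (mkBiadd (fun m' n => op (C.Pb (ncmk T₁ N M n m)) • m')
      (fun m' m'' n => by simp [smul_add])
      (fun m' n n' => by simp [add_smul]))
    (fun t m' n => by
      simp only [mkBiadd_apply]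
      rw [C.hPb1, op_mul, mul_smul])

@[simp] lemma Gam_mk (m : M) (m' : M) (n : N) :
    C.Gam m (ncmk T₂ M N m' n) = op (C.Pb (ncmk T₁ N M n m)) • m' := by
  simp [Gam]

lemma dd_smul_op (r : T₂) (m : M) :
    C.dd (op r • m) = C.Lam m (C.Pb.symm r) := by
  rw [C.dd_apply]
  rw [list_sum_congr (l := C.LB)
    (G := fun c => C.Lam m (actL r (ncmk T₁ N M c.1 c.2)))
    (by
      intro c _
      simp only [actL_mk, Lam_mk]
      rw [ncmk_rel])]
  rw [list_sum_pull (C.Lam m) C.LB (fun c => actL r (ncmk T₁ N M c.1 c.2))]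
  rw [list_sum_pull (actL r) C.LB (fun c => ncmk T₁ N M c.1 c.2)]
  rw [C.hLB, ← C.symm_mul_left', mul_one]

lemma jj_smul_act (a : T₁) (m : M) :
    C.jj (a • m) = C.Gam m (C.Pa.symm a) := by
  rw [C.jj_apply]
  rw [list_sum_congr (l := C.LA)
    (G := fun c => C.Gam m (actR a (ncmk T₂ M N c.1 c.2)))
    (by
      intro c _
      simp only [actR_mk, Gam_mk]
      rw [ncmk_rel])]
  rw [list_sum_pull (C.Gam m) C.LA (fun c => actR a (ncmk T₂ M N c.1 c.2))]
  rw [list_sum_pull (actR a) C.LA (fun c => ncmk T₂ M N c.1 c.2)]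
  rw [C.hLA, ← C.symm_mul_right, one_mul]

lemma dd_smul₁ (a : T₁) (m : M) : C.dd (a • m) = a • C.dd m := by
  rw [C.dd_apply, C.dd_apply, List.smul_sum, List.map_map]
  apply list_sum_congr
  intro c _
  simp only [Function.comp_apply]
  rw [C.hPa1, mul_smul]

lemma jj_smul₂ (r : T₂) (m : M) : C.jj (op r • m) = op r • C.jj m := by
  rw [C.jj_apply, C.jj_apply, List.smul_sum, List.map_map]
  apply list_sum_congr
  intro c _
  simp only [Function.comp_apply]
  rw [C.hPb2, op_mul, mul_smul]

lemma jj_smul₁ (a : T₁) (m : M) : C.jj (a • m) = a • C.jj m := by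
  rw [C.jj_smul_act, C.jj_apply, List.smul_sum, List.map_map]
  rw [list_sum_congr (l := C.LA)
    (F := (fun x => a • x) ∘ fun c => op (C.Pb (ncmk T₁ N M c.2 m)) • c.1)
    (G := fun c => C.Gam m (actL a (ncmk T₂ M N c.1 c.2)))
    (by
      intro c _
      simp only [Function.comp_apply, actL_mk, Gam_mk]
      rw [smul_comm])]
  rw [list_sum_pull (C.Gam m) C.LA (fun c => actL a (ncmk T₂ M N c.1 c.2))]
  rw [list_sum_pull (actL a) C.LA (fun c => ncmk T₂ M N c.1 c.2)]
  rw [C.hLA, ← C.symm_mul_left, mul_one]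

lemma dd_smul₂ (r : T₂) (m : M) : C.dd (op r • m) = op r • C.dd m := by
  rw [C.dd_smul_op, C.dd_apply, List.smul_sum, List.map_map]
  rw [list_sum_congr (l := C.LB)
    (F := (fun x => op r • x) ∘ fun c => C.Pa (ncmk T₂ M N m c.1) • c.2)
    (G := fun c => C.Lam m (actR r (ncmk T₁ N M c.1 c.2)))
    (by
      intro c _
      simp only [Function.comp_apply, actR_mk, Lam_mk]
      exact (smul_comm (C.Pa (ncmk T₂ M N m c.1)) (op r) c.2).symm)]
  rw [list_sum_pull (C.Lam m) C.LB (fun c => actR r (ncmk T₁ N M c.1 c.2))]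
  rw [list_sum_pull (actR r) C.LB (fun c => ncmk T₁ N M c.1 c.2)]
  rw [C.hLB, ← C.symm_mul_right', one_mul]

lemma dd_jj (m : M) : C.dd (C.jj m) = m := by
  rw [C.jj_apply, map_list_sum, List.map_map]
  rw [list_sum_congr (l := C.LA)
    (F := ⇑C.dd ∘ fun c => op (C.Pb (ncmk T₁ N M c.2 m)) • c.1)
    (G := fun c => C.Pa (ncmk T₂ M N c.1 c.2) • m)
    (by
      intro c _
      simp only [Function.comp_apply]
      rw [C.dd_smul_op, C.Pb.symm_apply_apply, C.Lam_mk])]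
  rw [list_sum_pull' (fun t => t • m) (zero_smul _ m) (fun x y => add_smul x y m)
    C.LA (fun c => C.Pa (ncmk T₂ M N c.1 c.2))]
  rw [list_sum_pull' (fun t => C.Pa t) (map_zero _) (map_add _)
    C.LA (fun c => ncmk T₂ M N c.1 c.2)]
  rw [C.hLA, C.Pa.apply_symm_apply, one_smul]

lemma jj_dd (m : M) : C.jj (C.dd m) = m := by
  rw [C.dd_apply, map_list_sum, List.map_map]
  rw [list_sum_congr (l := C.LB)
    (F := ⇑C.jj ∘ fun c => C.Pa (ncmk T₂ M N m c.1) • c.2)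
    (G := fun c => op (C.Pb (ncmk T₁ N M c.1 c.2)) • m)
    (by
      intro c _
      simp only [Function.comp_apply]
      rw [C.jj_smul_act, C.Pa.symm_apply_apply, C.Gam_mk])]
  rw [list_sum_pull' (fun t => op t • m)
    (by simp) (fun x y => by simp [op_add, add_smul])
    C.LB (fun c => C.Pb (ncmk T₁ N M c.1 c.2))]
  rw [list_sum_pull' (fun t => C.Pb t) (map_zero _) (map_add _)
    C.LB (fun c => ncmk T₁ N M c.1 c.2)]
  rw [C.hLB, C.Pb.apply_symm_apply, op_one, one_smul]

lemma pair_i2 (m : M) (n : N) (m' : M) :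
    C.Pa (ncmk T₂ M N m n) • m' = C.dd (op (C.Pb (ncmk T₁ N M n m')) • m) := by
  rw [C.dd_smul_op, C.Pb.symm_apply_apply, C.Lam_mk]

lemma pair_i2' (m : M) (n : N) (m' : M) :
    op (C.Pb (ncmk T₁ N M n m')) • m = C.jj (C.Pa (ncmk T₂ M N m n) • m') := by
  rw [C.jj_smul_act, C.Pa.symm_apply_apply, C.Gam_mk]

include C in
lemma end_full (h : M →+ M) (hh : ∀ (r : T₂) (m : M), h (op r • m) = op r • h m) :
    ∃ a : T₁, ∀ m, h m = a • m := by
  refine ⟨(C.LA.map fun c => C.Pa (ncmk T₂ M N (C.jj (h (C.dd c.1))) c.2)).sum, ?_⟩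
  intro m
  symm
  rw [← list_sum_pull' (fun t => t • m) (zero_smul _ m) (fun x y => add_smul x y m)
    C.LA (fun c => C.Pa (ncmk T₂ M N (C.jj (h (C.dd c.1))) c.2))]
  rw [list_sum_congr (l := C.LA)
    (F := fun c => C.Pa (ncmk T₂ M N (C.jj (h (C.dd c.1))) c.2) • m)
    (G := fun c => h (C.dd (op (C.Pb (ncmk T₁ N M c.2 m)) • c.1)))
    (by
      intro c _
      beta_reduce
      rw [C.pair_i2, ← C.jj_smul₂, ← hh, ← C.dd_smul₂, C.dd_jj])]
  rw [list_sum_pull' (fun x => h (C.dd x)) (by simp) (by simp)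
    C.LA (fun c => op (C.Pb (ncmk T₁ N M c.2 m)) • c.1)]
  rw [← C.jj_apply, C.dd_jj]

include C in
lemma end_full' (h : M →+ M) (hh : ∀ (a : T₁) (m : M), h (a • m) = a • h m) :
    ∃ r : T₂, ∀ m, h m = op r • m := by
  refine ⟨(C.LB.map fun c => C.Pb (ncmk T₁ N M c.1 (C.dd (h (C.jj c.2))))).sum, ?_⟩
  intro m
  symm
  rw [← list_sum_pull' (fun t => op t • m)
    (by simp) (fun x y => by simp [op_add, add_smul])
    C.LB (fun c => C.Pb (ncmk T₁ N M c.1 (C.dd (h (C.jj c.2)))))]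
  rw [list_sum_congr (l := C.LB)
    (F := fun c => op (C.Pb (ncmk T₁ N M c.1 (C.dd (h (C.jj c.2))))) • m)
    (G := fun c => h (C.jj (C.Pa (ncmk T₂ M N m c.1) • c.2)))
    (by
      intro c _
      beta_reduce
      rw [C.pair_i2', ← C.dd_smul₁, C.jj_dd, ← hh, ← C.jj_smul₁])]
  rw [list_sum_pull' (fun x => h (C.jj x)) (by simp) (by simp)
    C.LB (fun c => C.Pa (ncmk T₂ M N m c.1) • c.2)]
  rw [← C.dd_apply, C.jj_dd]

include C in
lemma act_inj₁ (a : T₁) (h : ∀ m : M, a • m = 0) : a = 0 := by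
  have h1 : a = C.Pa (actL a (C.Pa.symm 1)) := by
    rw [C.Pa_actL, C.Pa.apply_symm_apply, mul_one]
  rw [h1, ← C.hLA]
  rw [← list_sum_pull (actL a) C.LA (fun c => ncmk T₂ M N c.1 c.2)]
  rw [list_sum_congr (l := C.LA)
    (F := fun c => actL a (ncmk T₂ M N c.1 c.2))
    (G := fun _ => (0 : NCT T₂ M N))
    (by
      intro c _
      beta_reduce
      rw [actL_mk, h, ncmk_zero_left])]
  simp

include C in
lemma act_inj₂ (r : T₂) (h : ∀ m : M, op r • m = 0) : r = 0 := by
  have h1 : r = C.Pb (actR r (C.Pb.symm 1)) := by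
    rw [C.Pb_actR, C.Pb.apply_symm_apply, one_mul]
  rw [h1, ← C.hLB]
  rw [← list_sum_pull (actR r) C.LB (fun c => ncmk T₁ N M c.1 c.2)]
  rw [list_sum_congr (l := C.LB)
    (F := fun c => actR r (ncmk T₁ N M c.1 c.2))
    (G := fun _ => (0 : NCT T₁ N M))
    (by
      intro c _
      beta_reduce
      rw [actR_mk, h, ncmk_zero_right])]
  simp

include C in
lemma act_eq₁ (a a' : T₁) (h : ∀ m : M, a • m = a' • m) : a = a' := by
  have := C.act_inj₁ (a - a') (fun m => by rw [sub_smul, h, sub_self])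
  exact sub_eq_zero.mp this

include C in
lemma act_eq₂ (r r' : T₂) (h : ∀ m : M, op r • m = op r' • m) : r = r' := by
  have := C.act_inj₂ (r - r') (fun m => by rw [op_sub, sub_smul, h, sub_self])
  exact sub_eq_zero.mp this

end MoritaPair
end Pairing

/-- `Q ⊗_S R`, where `R` is a left `S`-module along `g : S →+* R`. -/
noncomputable def QtensR : Type u :=
  (Q ⊗[ℤ] R) ⧸ Submodule.span ℤ
    {z : Q ⊗[ℤ] R | ∃ (s : S) (q : Q) (r : R),
      z = (op s • q) ⊗ₜ[ℤ] r - q ⊗ₜ[ℤ] (g s * r)}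

noncomputable instance : AddCommGroup (QtensR g Q) :=
  inferInstanceAs (AddCommGroup ((Q ⊗[ℤ] R) ⧸ Submodule.span ℤ _))

noncomputable def qrmk (q : Q) (r : R) : QtensR g Q :=
  Submodule.Quotient.mk (q ⊗ₜ[ℤ] r)

/-- `A ⊗_B Q`, where `A` is a right `B`-module along `f : B →+* A`. -/
noncomputable def AtensQ : Type u :=
  (A ⊗[ℤ] Q) ⧸ Submodule.span ℤ
    {z : A ⊗[ℤ] Q | ∃ (b : B) (a : A) (q : Q),
      z = (a * f b) ⊗ₜ[ℤ] q - a ⊗ₜ[ℤ] (b • q)}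

noncomputable instance : AddCommGroup (AtensQ f Q) :=
  inferInstanceAs (AddCommGroup ((A ⊗[ℤ] Q) ⧸ Submodule.span ℤ _))

noncomputable def aqmk (a : A) (q : Q) : AtensQ f Q :=
  Submodule.Quotient.mk (a ⊗ₜ[ℤ] q)

section QRlemmas

variable {H : Type u} [AddCommGroup H]

noncomputable def qtLift (b : Q →+ R →+ H)
    (hb : ∀ (s : S) (q : Q) (r : R), b (op s • q) r = b q (g s * r)) :
    QtensR g Q →+ H :=
  quotLift _ b (by
    rintro z ⟨s, q, r, rfl⟩
    simp [map_sub, hb])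

@[simp] lemma qtLift_mk (b : Q →+ R →+ H) (hb) (q : Q) (r : R) :
    qtLift g Q b hb (qrmk g Q q r) = b q r :=
  quotLift_mk _ b _ q r

lemma qt_ext (F G : QtensR g Q →+ H)
    (h : ∀ q r, F (qrmk g Q q r) = G (qrmk g Q q r)) : F = G :=
  quot_addHom_ext F G h

lemma qt_exists_list (x : QtensR g Q) :
    ∃ l : List (Q × R), x = (l.map fun c => qrmk g Q c.1 c.2).sum :=
  quot_exists_list x

noncomputable def aqLift (b : A →+ Q →+ H)
    (hb : ∀ (bb : B) (a : A) (q : Q), b (a * f bb) q = b a (bb • q)) :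
    AtensQ f Q →+ H :=
  quotLift _ b (by
    rintro z ⟨bb, a, q, rfl⟩
    simp [map_sub, hb])

@[simp] lemma aqLift_mk (b : A →+ Q →+ H) (hb) (a : A) (q : Q) :
    aqLift f Q b hb (aqmk f Q a q) = b a q :=
  quotLift_mk _ b _ a q

lemma aq_ext (F G : AtensQ f Q →+ H)
    (h : ∀ a q, F (aqmk f Q a q) = G (aqmk f Q a q)) : F = G :=
  quot_addHom_ext F G h

lemma aq_exists_list (x : AtensQ f Q) :
    ∃ l : List (A × Q), x = (l.map fun c => aqmk f Q c.1 c.2).sum :=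
  quot_exists_list x

variable {g Q f}

lemma qrmk_rel (s : S) (q : Q) (r : R) :
    qrmk g Q (op s • q) r = qrmk g Q q (g s * r) := by
  unfold qrmk
  erw [Submodule.Quotient.eq]
  exact Submodule.subset_span ⟨s, q, r, rfl⟩

lemma aqmk_rel (bb : B) (a : A) (q : Q) :
    aqmk f Q (a * f bb) q = aqmk f Q a (bb • q) := by
  unfold aqmk
  erw [Submodule.Quotient.eq]
  exact Submodule.subset_span ⟨bb, a, q, rfl⟩

@[simp] lemma qrmk_add_left (q q' : Q) (r : R) :
    qrmk g Q (q + q') r = qrmk g Q q r + qrmk g Q q' r := by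
  unfold qrmk; rw [TensorProduct.add_tmul, Submodule.Quotient.mk_add]; rfl

@[simp] lemma qrmk_add_right (q : Q) (r r' : R) :
    qrmk g Q q (r + r') = qrmk g Q q r + qrmk g Q q r' := by
  unfold qrmk; rw [TensorProduct.tmul_add, Submodule.Quotient.mk_add]; rfl

@[simp] lemma qrmk_zero_left (r : R) : qrmk g Q (0 : Q) r = 0 := by
  unfold qrmk; rw [TensorProduct.zero_tmul, Submodule.Quotient.mk_zero]; rfl

@[simp] lemma qrmk_zero_right (q : Q) : qrmk g Q q (0 : R) = 0 := by
  unfold qrmk; rw [TensorProduct.tmul_zero, Submodule.Quotient.mk_zero]; rfl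

@[simp] lemma aqmk_add_left (a a' : A) (q : Q) :
    aqmk f Q (a + a') q = aqmk f Q a q + aqmk f Q a' q := by
  unfold aqmk; rw [TensorProduct.add_tmul, Submodule.Quotient.mk_add]; rfl

@[simp] lemma aqmk_add_right (a : A) (q q' : Q) :
    aqmk f Q a (q + q') = aqmk f Q a q + aqmk f Q a q' := by
  unfold aqmk; rw [TensorProduct.tmul_add, Submodule.Quotient.mk_add]; rfl

@[simp] lemma aqmk_zero_left (q : Q) : aqmk f Q (0 : A) q = 0 := by
  unfold aqmk; rw [TensorProduct.zero_tmul, Submodule.Quotient.mk_zero]; rfl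

@[simp] lemma aqmk_zero_right (a : A) : aqmk f Q a (0 : Q) = 0 := by
  unfold aqmk; rw [TensorProduct.tmul_zero, Submodule.Quotient.mk_zero]; rfl

end QRlemmas

section Forward

variable {f g} {P Pd Q Qd}

/-- A `B`-`R`-bilinear equivalence `Q ⊗_S R ≃ P`. -/
structure QRequiv where
  e : QtensR g Q ≃+ P
  he1 : ∀ (bb : B) (q : Q) (r : R), e (qrmk g Q (bb • q) r) = f bb • e (qrmk g Q q r)
  he2 : ∀ (r' : R) (q : Q) (r : R), e (qrmk g Q q (r * r')) = op r' • e (qrmk g Q q r)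

/-- An `A`-`S`-bilinear equivalence `A ⊗_B Q ≃ P`. -/
structure AQequiv where
  E : AtensQ f Q ≃+ P
  hE1 : ∀ (a' a : A) (q : Q), E (aqmk f Q (a' * a) q) = a' • E (aqmk f Q a q)
  hE2 : ∀ (s : S) (a : A) (q : Q), E (aqmk f Q a (op s • q)) = op (g s) • E (aqmk f Q a q)

variable (CP : MoritaPair (T₁ := A) (T₂ := R) (M := P) (N := Pd))
variable (CQ : MoritaPair (T₁ := B) (T₂ := S) (M := Q) (N := Qd))

/-- right action of `R` on `Q ⊗_S R`. -/
noncomputable def Rr (r : R) : QtensR g Q →+ QtensR g Q :=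
  qtLift g Q (mkBiadd (fun q r' => qrmk g Q q (r' * r))
      (fun q q' r' => by simp)
      (fun q r' r'' => by simp [add_mul]))
    (fun s q r' => by
      simp only [mkBiadd_apply]
      rw [qrmk_rel, mul_assoc])

@[simp] lemma Rr_mk (r : R) (q : Q) (r' : R) :
    Rr (g := g) (Q := Q) r (qrmk g Q q r') = qrmk g Q q (r' * r) := by
  simp [Rr]

/-- left action of `B` on `Q ⊗_S R`. -/
noncomputable def Lb (bb : B) : QtensR g Q →+ QtensR g Q :=
  qtLift g Q (mkBiadd (fun q r => qrmk g Q (bb • q) r)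
      (fun q q' r => by simp [smul_add])
      (fun q r r' => by simp))
    (fun s q r => by
      simp only [mkBiadd_apply]
      rw [smul_comm, qrmk_rel])

@[simp] lemma Lb_mk (bb : B) (q : Q) (r : R) :
    Lb (g := g) bb (qrmk g Q q r) = qrmk g Q (bb • q) r := by
  simp [Lb]

/-- `Θ_w : Q ⊗_S R →+ R`, `q ⊗ r ↦ g(δ(w ⊗ q)) * r`. -/
noncomputable def Th (w : Qd) : QtensR g Q →+ R :=
  qtLift g Q (mkBiadd (fun q r => g (CQ.Pb (ncmk B Qd Q w q)) * r)
      (fun q q' r => by simp [add_mul])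
      (fun q r r' => by simp [mul_add]))
    (fun s q r => by
      simp only [mkBiadd_apply]
      rw [CQ.hPb2, map_mul, mul_assoc])

@[simp] lemma Th_mk (w : Qd) (q : Q) (r : R) :
    Th CQ w (qrmk g Q q r) = g (CQ.Pb (ncmk B Qd Q w q)) * r := by
  simp [Th]

/-- left multiplication by `a : A` on `A ⊗_B Q`. -/
noncomputable def mulA (a : A) : AtensQ f Q →+ AtensQ f Q :=
  aqLift f Q (mkBiadd (fun a' q => aqmk f Q (a * a') q)
      (fun a' a'' q => by simp [mul_add])
      (fun a' q q' => by simp))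
    (fun bb a' q => by
      simp only [mkBiadd_apply]
      rw [← mul_assoc, aqmk_rel])

@[simp] lemma mulA_mk (a a' : A) (q : Q) :
    mulA (f := f) (Q := Q) a (aqmk f Q a' q) = aqmk f Q (a * a') q := by
  simp [mulA]

namespace QRequiv

variable (EE : QRequiv (f := f) (g := g) (P := P) (Q := Q))

noncomputable def phi (q : Q) : P := EE.e (qrmk g Q q 1)

lemma phi_add (q q' : Q) : EE.phi (q + q') = EE.phi q + EE.phi q' := by
  unfold phi
  rw [qrmk_add_left, map_add]

lemma phi_zero : EE.phi 0 = 0 := by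
  unfold phi
  rw [qrmk_zero_left, map_zero]

lemma e_qrmk (q : Q) (r : R) : EE.e (qrmk g Q q r) = op r • EE.phi q := by
  have := EE.he2 r q 1
  rw [one_mul] at this
  exact this

lemma phi_B (bb : B) (q : Q) : EE.phi (bb • q) = f bb • EE.phi q := EE.he1 bb q 1

lemma phi_S (s : S) (q : Q) : EE.phi (op s • q) = op (g s) • EE.phi q := by
  unfold phi
  rw [qrmk_rel, mul_one, EE.e_qrmk]
  rfl

lemma e_Rr (r : R) (t : QtensR g Q) : EE.e (Rr r t) = op r • EE.e t := by
  have h : (EE.e.toAddMonoidHom.comp (Rr r))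
      = (DistribSMul.toAddMonoidHom P (op r)).comp EE.e.toAddMonoidHom := by
    apply qt_ext
    intro q r'
    simpa using EE.he2 r q r'
  exact DFunLike.congr_fun h t

lemma esymm_op (r : R) (p : P) : EE.e.symm (op r • p) = Rr r (EE.e.symm p) := by
  apply EE.e.injective
  rw [EE.e_Rr, EE.e.apply_symm_apply, EE.e.apply_symm_apply]

lemma e_Lb (bb : B) (t : QtensR g Q) : EE.e (Lb bb t) = f bb • EE.e t := by
  have h : (EE.e.toAddMonoidHom.comp (Lb bb))
      = (DistribSMul.toAddMonoidHom P (f bb)).comp EE.e.toAddMonoidHom := by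
    apply qt_ext
    intro q r
    simpa using EE.he1 bb q r
  exact DFunLike.congr_fun h t

lemma esymm_fb (bb : B) (p : P) :
    EE.e.symm (f bb • p) = Lb bb (EE.e.symm p) := by
  apply EE.e.injective
  rw [EE.e_Lb, EE.e.apply_symm_apply, EE.e.apply_symm_apply]

/-- the pairing `θ₀ : Qd × P → R`. -/
noncomputable def th (w : Qd) (p : P) : R := Th CQ w (EE.e.symm p)

lemma th_add₁ (w w' : Qd) (p : P) :
    EE.th CQ (w + w') p = EE.th CQ w p + EE.th CQ w' p := by
  unfold th
  have h := DFunLike.congr_fun (qt_ext (g := g) (Q := Q)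
    (Th CQ (w + w')) ((Th CQ w) + (Th CQ w'))
    (fun q r => by
      simp only [Th_mk, AddMonoidHom.add_apply]
      rw [ncmk_add_left, map_add, map_add, add_mul])) (EE.e.symm p)
  simpa using h

lemma th_add₂ (w : Qd) (p p' : P) :
    EE.th CQ w (p + p') = EE.th CQ w p + EE.th CQ w p' := by
  unfold th
  rw [map_add, map_add]

lemma th_zero₁ (p : P) : EE.th CQ (0 : Qd) p = 0 := by
  have h := EE.th_add₁ CQ 0 0 p
  rw [add_zero] at h
  exact add_eq_right.mp h.symm

lemma th_zero₂ (w : Qd) : EE.th CQ w (0 : P) = 0 := by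
  unfold th
  rw [map_zero, map_zero]

lemma th_opR (w : Qd) (r : R) (p : P) :
    EE.th CQ w (op r • p) = EE.th CQ w p * r := by
  unfold th
  rw [EE.esymm_op]
  have h := DFunLike.congr_fun (qt_ext (g := g) (Q := Q)
    ((Th CQ w).comp (Rr r))
    ((AddMonoidHom.mulRight r).comp (Th CQ w))
    (fun q r' => by simp [mul_assoc])) (EE.e.symm p)
  simpa using h

lemma th_fb (w : Qd) (bb : B) (p : P) :
    EE.th CQ w (f bb • p) = EE.th CQ (op bb • w) p := by
  unfold th
  rw [EE.esymm_fb]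
  have h := DFunLike.congr_fun (qt_ext (g := g) (Q := Q)
    ((Th CQ w).comp (Lb bb)) (Th CQ (op bb • w))
    (fun q r => by
      simp only [AddMonoidHom.coe_comp, Function.comp_apply, Lb_mk, Th_mk]
      rw [ncmk_rel])) (EE.e.symm p)
  simpa using h

lemma th_sw (s : S) (w : Qd) (p : P) :
    EE.th CQ (s • w) p = g s * EE.th CQ w p := by
  unfold th
  have h := DFunLike.congr_fun (qt_ext (g := g) (Q := Q)
    (Th CQ (s • w)) ((AddMonoidHom.mulLeft (g s)).comp (Th CQ w))
    (fun q r => by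
      show Th CQ (s • w) (qrmk g Q q r) = g s * Th CQ w (qrmk g Q q r)
      rw [Th_mk, Th_mk, CQ.hPb1, map_mul, mul_assoc])) (EE.e.symm p)
  simpa using h

lemma th_phi (w : Qd) (q : Q) :
    EE.th CQ w (EE.phi q) = g (CQ.Pb (ncmk B Qd Q w q)) := by
  unfold th phi
  rw [EE.e.symm_apply_apply, Th_mk, mul_one]


/-- `Xhat_w : P ⊗_R Pd →+ Pd`, `m ⊗ n ↦ θ₀(w, d m) • n`. -/
noncomputable def Xh (w : Qd) : NCT R P Pd →+ Pd :=
  nctLift R P Pd (mkBiadd (fun m n => EE.th CQ w (CP.dd m) • n)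
      (fun m m' n => by
        beta_reduce
        rw [map_add, EE.th_add₂, add_smul])
      (fun m n n' => by simp [smul_add]))
    (fun r m n => by
      simp only [mkBiadd_apply]
      rw [CP.dd_smul₂, EE.th_opR, mul_smul])

@[simp] lemma Xh_mk (w : Qd) (m : P) (n : Pd) :
    EE.Xh CP CQ w (ncmk R P Pd m n) = EE.th CQ w (CP.dd m) • n := by
  simp [Xh]

/-- `X : Qd → Pd`. -/
noncomputable def X (w : Qd) : Pd := EE.Xh CP CQ w (CP.Pa.symm 1)

lemma X_add (w w' : Qd) : EE.X CP CQ (w + w') = EE.X CP CQ w + EE.X CP CQ w' := by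
  unfold X
  have h := DFunLike.congr_fun (nct_ext R P Pd
    (EE.Xh CP CQ (w + w')) (EE.Xh CP CQ w + EE.Xh CP CQ w')
    (fun m n => by
      simp only [Xh_mk, AddMonoidHom.add_apply]
      rw [EE.th_add₁, add_smul])) (CP.Pa.symm 1)
  simpa using h

lemma X_zero : EE.X CP CQ (0 : Qd) = 0 := by
  have h := EE.X_add CP CQ 0 0
  rw [add_zero] at h
  exact add_eq_right.mp h.symm

lemma pbX (w : Qd) (p : P) :
    CP.Pb (ncmk A Pd P (EE.X CP CQ w) p) = EE.th CQ w p := by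
  have key := DFunLike.congr_fun (nct_ext R P Pd
    (AddMonoidHom.mk' (fun t => CP.Pb (ncmk A Pd P (EE.Xh CP CQ w t) p))
      (fun t t' => by beta_reduce; rw [map_add, ncmk_add_left, map_add]))
    (AddMonoidHom.mk' (fun t => EE.th CQ w (CP.dd (CP.Gam p t)))
      (fun t t' => by beta_reduce; rw [map_add, map_add, EE.th_add₂]))
    (fun m n => by
      simp only [AddMonoidHom.mk'_apply, Xh_mk, CP.Gam_mk]
      rw [CP.hPb1, CP.dd_smul₂, EE.th_opR])) (CP.Pa.symm 1)
  simp only [AddMonoidHom.mk'_apply] at key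
  rw [show ncmk A Pd P (EE.X CP CQ w) p
      = ncmk A Pd P (EE.Xh CP CQ w (CP.Pa.symm 1)) p from rfl]
  rw [key]
  rw [show CP.Gam p (CP.Pa.symm 1) = CP.jj p from by
    rw [← CP.jj_smul_act, one_smul]]
  rw [CP.dd_jj]

lemma Xb (bb : B) (w : Qd) :
    EE.X CP CQ (op bb • w) = op (f bb) • EE.X CP CQ w := by
  have h1 : EE.Xh CP CQ (op bb • w) (CP.Pa.symm 1)
      = EE.Xh CP CQ w (actL (f bb) (CP.Pa.symm 1)) := by
    have h := DFunLike.congr_fun (nct_ext R P Pd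
      (EE.Xh CP CQ (op bb • w)) ((EE.Xh CP CQ w).comp (actL (f bb)))
      (fun m n => by
        simp only [Xh_mk, AddMonoidHom.coe_comp, Function.comp_apply, actL_mk]
        rw [← EE.th_fb, CP.dd_smul₁])) (CP.Pa.symm 1)
    simpa using h
  have h2 : op (f bb) • EE.Xh CP CQ w (CP.Pa.symm 1)
      = EE.Xh CP CQ w (actR (f bb) (CP.Pa.symm 1)) := by
    have h := DFunLike.congr_fun (nct_ext R P Pd
      ((DistribSMul.toAddMonoidHom Pd (op (f bb))).comp (EE.Xh CP CQ w))
      ((EE.Xh CP CQ w).comp (actR (f bb)))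
      (fun m n => by
        simp only [AddMonoidHom.coe_comp, Function.comp_apply, Xh_mk, actR_mk,
          DistribSMul.toAddMonoidHom_apply]
        exact (smul_comm (EE.th CQ w (CP.dd m)) (op (f bb)) n).symm)) (CP.Pa.symm 1)
    simpa using h
  show EE.Xh CP CQ (op bb • w) (CP.Pa.symm 1) = op (f bb) • EE.Xh CP CQ w (CP.Pa.symm 1)
  rw [h1, h2, ← CP.symm_mul_left, ← CP.symm_mul_right, mul_one, one_mul]

lemma Xs (s : S) (w : Qd) :
    EE.X CP CQ (s • w) = g s • EE.X CP CQ w := by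
  have h := DFunLike.congr_fun (nct_ext R P Pd
    (EE.Xh CP CQ (s • w))
    ((DistribSMul.toAddMonoidHom Pd (g s)).comp (EE.Xh CP CQ w))
    (fun m n => by
      simp only [Xh_mk, AddMonoidHom.coe_comp, Function.comp_apply,
        DistribSMul.toAddMonoidHom_apply]
      rw [EE.th_sw, mul_smul])) (CP.Pa.symm 1)
  simp at h; exact h

/-- The map `E : A ⊗_B Q →+ P`, `a ⊗ q ↦ a • φ(q)`. -/
noncomputable def Emap : AtensQ f Q →+ P :=
  aqLift f Q (mkBiadd (fun a q => a • EE.phi q)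
      (fun a a' q => by simp [add_smul])
      (fun a q q' => by
        beta_reduce
        rw [EE.phi_add, smul_add]))
    (fun bb a q => by
      simp only [mkBiadd_apply]
      rw [EE.phi_B, mul_smul])

@[simp] lemma Emap_mk (a : A) (q : Q) :
    EE.Emap (aqmk f Q a q) = a • EE.phi q := by
  simp [Emap]

/-- `Ψ_{p''} : Qd ⊗_B Q →+ A ⊗_B Q`, `w ⊗ z ↦ Pa(p'' ⊗ X w) ⊗ z`. -/
noncomputable def Psi (p'' : P) : NCT B Qd Q →+ AtensQ f Q :=
  nctLift B Qd Q (mkBiadd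
      (fun w z => aqmk f Q (CP.Pa (ncmk R P Pd p'' (EE.X CP CQ w))) z)
      (fun w w' z => by
        beta_reduce
        rw [EE.X_add, ncmk_add_right, map_add, aqmk_add_left])
      (fun w z z' => by simp))
    (fun bb w z => by
      simp only [mkBiadd_apply]
      rw [EE.Xb, CP.hPa2, aqmk_rel])

@[simp] lemma Psi_mk (p'' : P) (w : Qd) (z : Q) :
    EE.Psi CP CQ p'' (ncmk B Qd Q w z)
      = aqmk f Q (CP.Pa (ncmk R P Pd p'' (EE.X CP CQ w))) z := by
  simp [Psi]

/-- The candidate inverse `Einv : P →+ A ⊗_B Q`. -/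
noncomputable def Einv : P →+ AtensQ f Q :=
  AddMonoidHom.mk' (fun p => EE.Psi CP CQ (CP.jj p) (CQ.Pb.symm 1))
    (fun p p' => by
      have h := DFunLike.congr_fun (nct_ext B Qd Q
        (EE.Psi CP CQ (CP.jj (p + p')))
        (EE.Psi CP CQ (CP.jj p) + EE.Psi CP CQ (CP.jj p'))
        (fun w z => by
          simp only [Psi_mk, AddMonoidHom.add_apply]
          rw [map_add, ncmk_add_left, map_add, aqmk_add_left])) (CQ.Pb.symm 1)
      simpa using h)

lemma Einv_apply (p : P) :
    EE.Einv CP CQ p = EE.Psi CP CQ (CP.jj p) (CQ.Pb.symm 1) := rfl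

lemma E_Einv (p : P) : EE.Emap (EE.Einv CP CQ p) = p := by
  rw [EE.Einv_apply CP CQ]
  have key : ∀ t : NCT B Qd Q,
      EE.Emap (EE.Psi CP CQ (CP.jj p) t)
        = CP.dd (op (g (CQ.Pb t)) • CP.jj p) := by
    intro t
    have h := DFunLike.congr_fun (nct_ext B Qd Q
      (EE.Emap.comp (EE.Psi CP CQ (CP.jj p)))
      (AddMonoidHom.mk' (fun t => CP.dd (op (g (CQ.Pb t)) • CP.jj p))
        (fun t t' => by
          beta_reduce
          rw [map_add, map_add, op_add, add_smul, map_add]))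
      (fun w z => by
        simp only [AddMonoidHom.coe_comp, Function.comp_apply, Psi_mk,
          Emap_mk, AddMonoidHom.mk'_apply]
        rw [CP.pair_i2, EE.pbX CP CQ, EE.th_phi])) t
    simpa using h
  rw [key (CQ.Pb.symm 1), CQ.Pb.apply_symm_apply, map_one, op_one, one_smul,
    CP.dd_jj]

lemma Psi_smulA (a : A) (p'' : P) (t : NCT B Qd Q) :
    EE.Psi CP CQ (a • p'') t = mulA a (EE.Psi CP CQ p'' t) := by
  have h := DFunLike.congr_fun (nct_ext B Qd Q
    (EE.Psi CP CQ (a • p''))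
    ((mulA a).comp (EE.Psi CP CQ p''))
    (fun w z => by
      simp only [Psi_mk, AddMonoidHom.coe_comp, Function.comp_apply, mulA_mk]
      rw [CP.hPa1])) t
  simpa using h

lemma Einv_smulA (a : A) (p : P) :
    EE.Einv CP CQ (a • p) = mulA a (EE.Einv CP CQ p) := by
  rw [EE.Einv_apply CP CQ, EE.Einv_apply CP CQ, CP.jj_smul₁, EE.Psi_smulA CP CQ]

lemma Psi_zero (t : NCT B Qd Q) : EE.Psi CP CQ (0 : P) t = 0 := by
  have h := DFunLike.congr_fun (nct_ext B Qd Q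
    (EE.Psi CP CQ (0 : P)) 0
    (fun w z => by
      simp only [Psi_mk, AddMonoidHom.zero_apply]
      rw [ncmk_zero_left, map_zero, aqmk_zero_left])) t
  simpa using h

lemma Psi_add (p p' : P) (t : NCT B Qd Q) :
    EE.Psi CP CQ (p + p') t = EE.Psi CP CQ p t + EE.Psi CP CQ p' t := by
  have h := DFunLike.congr_fun (nct_ext B Qd Q
    (EE.Psi CP CQ (p + p'))
    (EE.Psi CP CQ p + EE.Psi CP CQ p')
    (fun w z => by
      simp only [Psi_mk, AddMonoidHom.add_apply]
      rw [ncmk_add_left, map_add, aqmk_add_left])) t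
  simpa using h

lemma Psi_op (s : S) (p'' : P) (t : NCT B Qd Q) :
    EE.Psi CP CQ (op (g s) • p'') t = EE.Psi CP CQ p'' (actL s t) := by
  have h := DFunLike.congr_fun (nct_ext B Qd Q
    (EE.Psi CP CQ (op (g s) • p''))
    ((EE.Psi CP CQ p'').comp (actL s))
    (fun w z => by
      simp only [Psi_mk, AddMonoidHom.coe_comp, Function.comp_apply, actL_mk]
      rw [ncmk_rel, ← EE.Xs CP CQ])) t
  simpa using h

/-- `J̃ = j_Q ⊗ id : Q ⊗_S R →+ Q ⊗_S R`. -/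
noncomputable def Jt : QtensR g Q →+ QtensR g Q :=
  qtLift g Q (mkBiadd (fun q r => qrmk g Q (CQ.jj q) r)
      (fun q q' r => by
        beta_reduce
        rw [map_add, qrmk_add_left])
      (fun q r r' => by simp))
    (fun s q r => by
      simp only [mkBiadd_apply]
      rw [CQ.jj_smul₂, qrmk_rel])

@[simp] lemma Jt_mk (q : Q) (r : R) :
    Jt CQ (qrmk g Q q r) = qrmk g Q (CQ.jj q) r := by
  simp [Jt]

/-- `D̃ = d_Q ⊗ id : Q ⊗_S R →+ Q ⊗_S R`. -/
noncomputable def Dt : QtensR g Q →+ QtensR g Q :=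
  qtLift g Q (mkBiadd (fun q r => qrmk g Q (CQ.dd q) r)
      (fun q q' r => by
        beta_reduce
        rw [map_add, qrmk_add_left])
      (fun q r r' => by simp))
    (fun s q r => by
      simp only [mkBiadd_apply]
      rw [CQ.dd_smul₂, qrmk_rel])

@[simp] lemma Dt_mk (q : Q) (r : R) :
    Dt CQ (qrmk g Q q r) = qrmk g Q (CQ.dd q) r := by
  simp [Dt]

lemma Dt_Jt (t : QtensR g Q) : Dt CQ (Jt CQ t) = t := by
  have h := DFunLike.congr_fun (qt_ext (g := g) (Q := Q)
    ((Dt CQ).comp (Jt CQ)) (AddMonoidHom.id _)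
    (fun q r => by
      simp only [AddMonoidHom.coe_comp, Function.comp_apply, Jt_mk, Dt_mk,
        AddMonoidHom.id_apply]
      rw [CQ.dd_jj])) t
  simpa using h

/-- The distinguished element `c ∈ A`. -/
noncomputable def cA : A :=
  ((CQ.LA).map fun c =>
    CP.Pa (ncmk R P Pd (CP.jj (EE.phi c.1)) (EE.X CP CQ c.2))).sum

lemma cAct (p : P) : EE.cA CP CQ • p = EE.e (Jt CQ (EE.e.symm p)) := by
  have step2 : ∀ t : QtensR g Q,
      ((CQ.LA).map fun c => op (Th CQ c.2 t) • EE.phi c.1).sum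
        = EE.e (Jt CQ t) := by
    intro t
    have h := DFunLike.congr_fun (qt_ext (g := g) (Q := Q)
      (AddMonoidHom.mk'
        (fun t => ((CQ.LA).map fun c => op (Th CQ c.2 t) • EE.phi c.1).sum)
        (fun t t' => by
          rw [← list_sum_map_add]
          apply list_sum_congr
          intro c _
          rw [map_add, op_add, add_smul]))
      (EE.e.toAddMonoidHom.comp (Jt CQ))
      (fun q r => by
        simp only [AddMonoidHom.mk'_apply, AddMonoidHom.coe_comp,
          Function.comp_apply, AddEquiv.coe_toAddMonoidHom, Jt_mk]
        rw [EE.e_qrmk]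
        rw [list_sum_congr (l := CQ.LA)
          (F := fun c => op (Th CQ c.2 (qrmk g Q q r)) • EE.phi c.1)
          (G := fun c => op r •
            EE.phi (op (CQ.Pb (ncmk B Qd Q c.2 q)) • c.1))
          (by
            intro c _
            beta_reduce
            rw [Th_mk, op_mul, mul_smul, EE.phi_S])]
        rw [list_sum_pull' (fun x => op r • EE.phi x)
          (by simp [EE.phi_zero])
          (fun x y => by simp [EE.phi_add, smul_add])
          CQ.LA (fun c => op (CQ.Pb (ncmk B Qd Q c.2 q)) • c.1)]
        rw [← CQ.jj_apply])) t
    simpa using h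
  have step1 : EE.cA CP CQ • p
      = ((CQ.LA).map fun c => op (Th CQ c.2 (EE.e.symm p)) • EE.phi c.1).sum := by
    unfold cA
    rw [← list_sum_pull' (fun t => t • p) (zero_smul _ p) (fun x y => add_smul x y p)
      CQ.LA (fun c => CP.Pa (ncmk R P Pd (CP.jj (EE.phi c.1)) (EE.X CP CQ c.2)))]
    apply list_sum_congr
    intro c _
    beta_reduce
    rw [CP.pair_i2, EE.pbX CP CQ, ← CP.jj_smul₂, CP.dd_jj]
    rfl
  rw [step1]
  exact step2 (EE.e.symm p)

include CP in
lemma exists_c' : ∃ c' : A, ∀ p : P, EE.e (Dt CQ (EE.e.symm p)) = c' • p := by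
  obtain ⟨a, ha⟩ := CP.end_full (AddMonoidHom.mk'
    (fun p => EE.e (Dt CQ (EE.e.symm p))) (fun p p' => by
      beta_reduce
      rw [map_add, map_add, map_add]))
    (by
      intro r p
      simp only [AddMonoidHom.mk'_apply]
      rw [EE.esymm_op]
      have h : Dt CQ (Rr r (EE.e.symm p)) = Rr r (Dt CQ (EE.e.symm p)) := by
        have := DFunLike.congr_fun (qt_ext (g := g) (Q := Q)
          ((Dt CQ).comp (Rr r)) ((Rr r).comp (Dt CQ))
          (fun q r' => by simp)) (EE.e.symm p)
        simpa using this
      rw [h, EE.e_Rr])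
  exact ⟨a, fun p => ha p⟩

lemma c'_cA (c' : A) (hc' : ∀ p : P, EE.e (Dt CQ (EE.e.symm p)) = c' • p) :
    c' * EE.cA CP CQ = 1 := by
  apply CP.act_eq₁
  intro p
  rw [mul_smul, EE.cAct CP CQ, ← hc', EE.e.symm_apply_apply, Dt_Jt,
    EE.e.apply_symm_apply, one_smul]

lemma phi_jjQ (q' : Q) :
    CP.jj (EE.phi (CQ.jj q'))
      = ((CQ.LA).map fun c =>
          op (g (CQ.Pb (ncmk B Qd Q c.2 q'))) • CP.jj (EE.phi c.1)).sum := by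
  rw [CQ.jj_apply]
  rw [← list_sum_pull' (fun x => CP.jj (EE.phi x))
    (by simp [EE.phi_zero]) (fun x y => by simp [EE.phi_add])
    CQ.LA (fun c => op (CQ.Pb (ncmk B Qd Q c.2 q')) • c.1)]
  apply list_sum_congr
  intro c _
  beta_reduce
  rw [EE.phi_S, CP.jj_smul₂]

lemma Einv_phi (q : Q) :
    EE.Einv CP CQ (EE.phi q) = aqmk f Q (EE.cA CP CQ) (CQ.dd q) := by
  rw [EE.Einv_apply CP CQ]
  conv_lhs => rw [show q = CQ.jj (CQ.dd q) from (CQ.jj_dd q).symm]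
  rw [EE.phi_jjQ CP CQ (CQ.dd q)]
  rw [← list_sum_pull' (fun x => EE.Psi CP CQ x (CQ.Pb.symm 1))
    (EE.Psi_zero CP CQ _) (fun x y => EE.Psi_add CP CQ x y _)
    CQ.LA (fun c => op (g (CQ.Pb (ncmk B Qd Q c.2 (CQ.dd q)))) • CP.jj (EE.phi c.1))]
  rw [list_sum_congr (l := CQ.LA)
    (F := fun c => EE.Psi CP CQ
      (op (g (CQ.Pb (ncmk B Qd Q c.2 (CQ.dd q)))) • CP.jj (EE.phi c.1)) (CQ.Pb.symm 1))
    (G := fun c => aqmk f Q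
      (CP.Pa (ncmk R P Pd (CP.jj (EE.phi c.1)) (EE.X CP CQ c.2))) (CQ.dd q))
    (by
      intro c _
      beta_reduce
      rw [EE.Psi_op CP CQ, ← CQ.symm_mul_left', mul_one,
        CQ.Pb.symm_apply_apply, Psi_mk])]
  rw [list_sum_pull' (fun x => aqmk f Q x (CQ.dd q))
    (by simp) (fun x y => by simp)
    CQ.LA (fun c => CP.Pa (ncmk R P Pd (CP.jj (EE.phi c.1)) (EE.X CP CQ c.2)))]
  rfl

lemma Einv_surj (t : AtensQ f Q) : ∃ p : P, EE.Einv CP CQ p = t := by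
  obtain ⟨c', hc'⟩ := EE.exists_c' CP CQ
  have key : ∀ (a : A) (q : Q),
      EE.Einv CP CQ ((a * c') • EE.phi (CQ.jj q)) = aqmk f Q a q := by
    intro a q
    rw [EE.Einv_smulA CP CQ, EE.Einv_phi CP CQ, mulA_mk, CQ.dd_jj,
      mul_assoc, EE.c'_cA CP CQ c' hc', mul_one]
  obtain ⟨l, rfl⟩ := aq_exists_list f Q t
  refine ⟨(l.map fun c => (c.1 * c') • EE.phi (CQ.jj c.2)).sum, ?_⟩
  rw [map_list_sum, List.map_map]
  apply list_sum_congr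
  intro c _
  simp only [Function.comp_apply]
  exact key c.1 c.2

/-- The forward direction: from a `B`-`R`-equivalence `Q ⊗_S R ≃ P` to an
`A`-`S`-equivalence `A ⊗_B Q ≃ P`. -/
noncomputable def toAQ : AQequiv (f := f) (g := g) (P := P) (Q := Q) where
  E := { toFun := EE.Emap
         invFun := EE.Einv CP CQ
         left_inv := by
           intro t
           obtain ⟨p, rfl⟩ := EE.Einv_surj CP CQ t
           rw [EE.E_Einv CP CQ]
         right_inv := fun p => EE.E_Einv CP CQ p
         map_add' := EE.Emap.map_add }
  hE1 := by
    intro a' a q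
    show EE.Emap _ = a' • EE.Emap _
    rw [Emap_mk, Emap_mk, mul_smul]
  hE2 := by
    intro s a q
    show EE.Emap _ = op (g s) • EE.Emap _
    rw [Emap_mk, Emap_mk, EE.phi_S, smul_comm]

end QRequiv
end Forward

section Backward

variable {f g} {P Pd Q Qd}
variable (CP : MoritaPair (T₁ := A) (T₂ := R) (M := P) (N := Pd))
variable (CQ : MoritaPair (T₁ := B) (T₂ := S) (M := Q) (N := Qd))

/-- right action of `S` on `A ⊗_B Q`. -/
noncomputable def Ss (s : S) : AtensQ f Q →+ AtensQ f Q :=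
  aqLift f Q (mkBiadd (fun a q => aqmk f Q a (op s • q))
      (fun a a' q => by simp)
      (fun a q q' => by simp [smul_add]))
    (fun bb a q => by
      simp only [mkBiadd_apply]
      rw [aqmk_rel, smul_comm])

@[simp] lemma Ss_mk (s : S) (a : A) (q : Q) :
    Ss (f := f) s (aqmk f Q a q) = aqmk f Q a (op s • q) := by
  simp [Ss]

/-- `Θ̄_w : A ⊗_B Q →+ A`, `a ⊗ q ↦ a * f(γ(q ⊗ w))`. -/
noncomputable def Thb (w : Qd) : AtensQ f Q →+ A :=
  aqLift f Q (mkBiadd (fun a q => a * f (CQ.Pa (ncmk S Q Qd q w)))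
      (fun a a' q => by simp [add_mul])
      (fun a q q' => by
        beta_reduce
        rw [ncmk_add_left, map_add, map_add, mul_add]))
    (fun bb a q => by
      simp only [mkBiadd_apply]
      rw [CQ.hPa1, map_mul, mul_assoc])

@[simp] lemma Thb_mk (w : Qd) (a : A) (q : Q) :
    Thb CQ w (aqmk f Q a q) = a * f (CQ.Pa (ncmk S Q Qd q w)) := by
  simp [Thb]

namespace AQequiv

variable (FF : AQequiv (f := f) (g := g) (P := P) (Q := Q))

noncomputable def phi (q : Q) : P := FF.E (aqmk f Q 1 q)

lemma phi_add (q q' : Q) : FF.phi (q + q') = FF.phi q + FF.phi q' := by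
  unfold phi
  rw [aqmk_add_right, map_add]

lemma phi_zero : FF.phi 0 = 0 := by
  unfold phi
  rw [aqmk_zero_right, map_zero]

lemma E_aqmk (a : A) (q : Q) : FF.E (aqmk f Q a q) = a • FF.phi q := by
  have := FF.hE1 a 1 q
  rw [mul_one] at this
  exact this

lemma phi_B (bb : B) (q : Q) : FF.phi (bb • q) = f bb • FF.phi q := by
  unfold phi
  rw [← aqmk_rel, one_mul, show FF.E (aqmk f Q (f bb) q) = f bb • FF.phi q from
    FF.E_aqmk (f bb) q]
  rfl

lemma phi_S (s : S) (q : Q) : FF.phi (op s • q) = op (g s) • FF.phi q :=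
  FF.hE2 s 1 q

lemma E_mulA (a : A) (t : AtensQ f Q) : FF.E (mulA a t) = a • FF.E t := by
  have h := DFunLike.congr_fun (aq_ext f Q
    (FF.E.toAddMonoidHom.comp (mulA a))
    ((DistribSMul.toAddMonoidHom P a).comp FF.E.toAddMonoidHom)
    (fun a' q => by simpa using FF.hE1 a a' q)) t
  simpa using h

lemma Esymm_smulA (a : A) (p : P) :
    FF.E.symm (a • p) = mulA a (FF.E.symm p) := by
  apply FF.E.injective
  rw [FF.E_mulA, FF.E.apply_symm_apply, FF.E.apply_symm_apply]

lemma E_Ss (s : S) (t : AtensQ f Q) : FF.E (Ss s t) = op (g s) • FF.E t := by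
  have h := DFunLike.congr_fun (aq_ext f Q
    (FF.E.toAddMonoidHom.comp (Ss s))
    ((DistribSMul.toAddMonoidHom P (op (g s))).comp FF.E.toAddMonoidHom)
    (fun a q => by simpa using FF.hE2 s a q)) t
  simpa using h

lemma Esymm_S (s : S) (p : P) :
    FF.E.symm (op (g s) • p) = Ss s (FF.E.symm p) := by
  apply FF.E.injective
  rw [FF.E_Ss, FF.E.apply_symm_apply, FF.E.apply_symm_apply]

/-- the pairing `θ̄₀ : P × Qd → A`. -/
noncomputable def th (p : P) (w : Qd) : A := Thb CQ w (FF.E.symm p)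

lemma th_add₂ (p : P) (w w' : Qd) :
    FF.th CQ p (w + w') = FF.th CQ p w + FF.th CQ p w' := by
  unfold th
  have h := DFunLike.congr_fun (aq_ext f Q
    (Thb CQ (w + w')) ((Thb CQ w) + (Thb CQ w'))
    (fun a q => by
      simp only [Thb_mk, AddMonoidHom.add_apply]
      rw [ncmk_add_right, map_add, map_add, mul_add])) (FF.E.symm p)
  simpa using h

lemma th_add₁ (p p' : P) (w : Qd) :
    FF.th CQ (p + p') w = FF.th CQ p w + FF.th CQ p' w := by
  unfold th
  rw [map_add, map_add]

lemma th_zero₂ (p : P) : FF.th CQ p (0 : Qd) = 0 := by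
  have h := FF.th_add₂ CQ p 0 0
  rw [add_zero] at h
  exact add_eq_right.mp h.symm

lemma th_zero₁ (w : Qd) : FF.th CQ (0 : P) w = 0 := by
  unfold th
  rw [map_zero, map_zero]

lemma th_smulA (a : A) (p : P) (w : Qd) :
    FF.th CQ (a • p) w = a * FF.th CQ p w := by
  unfold th
  rw [FF.Esymm_smulA]
  have h := DFunLike.congr_fun (aq_ext f Q
    ((Thb CQ w).comp (mulA a))
    ((AddMonoidHom.mulLeft a).comp (Thb CQ w))
    (fun a' q => by
      show Thb CQ w (mulA a (aqmk f Q a' q)) = a * Thb CQ w (aqmk f Q a' q)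
      rw [mulA_mk, Thb_mk, Thb_mk, mul_assoc])) (FF.E.symm p)
  simpa using h

lemma th_S (s : S) (p : P) (w : Qd) :
    FF.th CQ (op (g s) • p) w = FF.th CQ p (s • w) := by
  unfold th
  rw [FF.Esymm_S]
  have h := DFunLike.congr_fun (aq_ext f Q
    ((Thb CQ w).comp (Ss s)) (Thb CQ (s • w))
    (fun a q => by
      show Thb CQ w (Ss s (aqmk f Q a q)) = Thb CQ (s • w) (aqmk f Q a q)
      rw [Ss_mk, Thb_mk, Thb_mk, ncmk_rel])) (FF.E.symm p)
  simpa using h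

lemma th_wB (p : P) (bb : B) (w : Qd) :
    FF.th CQ p (op bb • w) = FF.th CQ p w * f bb := by
  unfold th
  have h := DFunLike.congr_fun (aq_ext f Q
    (Thb CQ (op bb • w))
    ((AddMonoidHom.mulRight (f bb)).comp (Thb CQ w))
    (fun a q => by
      show Thb CQ (op bb • w) (aqmk f Q a q) = Thb CQ w (aqmk f Q a q) * f bb
      rw [Thb_mk, Thb_mk, CQ.hPa2, map_mul, mul_assoc])) (FF.E.symm p)
  simpa using h

lemma th_phi (q : Q) (w : Qd) :
    FF.th CQ (FF.phi q) w = f (CQ.Pa (ncmk S Q Qd q w)) := by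
  unfold th phi
  rw [FF.E.symm_apply_apply, Thb_mk, one_mul]

/-- `X̄hat_w : Pd ⊗_A P →+ Pd`, `n ⊗ m ↦ n • θ̄₀(j m, w)`. -/
noncomputable def Xh (w : Qd) : NCT A Pd P →+ Pd :=
  nctLift A Pd P (mkBiadd (fun n m => op (FF.th CQ (CP.jj m) w) • n)
      (fun n n' m => by simp [smul_add])
      (fun n m m' => by
        beta_reduce
        rw [map_add, FF.th_add₁, op_add, add_smul]))
    (fun a n m => by
      simp only [mkBiadd_apply]
      rw [CP.jj_smul₁, FF.th_smulA, op_mul, mul_smul])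

@[simp] lemma Xh_mk (w : Qd) (n : Pd) (m : P) :
    FF.Xh CP CQ w (ncmk A Pd P n m) = op (FF.th CQ (CP.jj m) w) • n := by
  simp [Xh]

/-- `X̄ : Qd → Pd`. -/
noncomputable def X (w : Qd) : Pd := FF.Xh CP CQ w (CP.Pb.symm 1)

lemma X_add (w w' : Qd) : FF.X CP CQ (w + w') = FF.X CP CQ w + FF.X CP CQ w' := by
  have h := DFunLike.congr_fun (nct_ext A Pd P
    (FF.Xh CP CQ (w + w')) (FF.Xh CP CQ w + FF.Xh CP CQ w')
    (fun n m => by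
      simp only [Xh_mk, AddMonoidHom.add_apply]
      rw [FF.th_add₂, op_add, add_smul])) (CP.Pb.symm 1)
  simp at h; exact h

lemma paX (p : P) (w : Qd) :
    CP.Pa (ncmk R P Pd p (FF.X CP CQ w)) = FF.th CQ p w := by
  have key := DFunLike.congr_fun (nct_ext A Pd P
    (AddMonoidHom.mk' (fun t => CP.Pa (ncmk R P Pd p (FF.Xh CP CQ w t)))
      (fun t t' => by beta_reduce; rw [map_add, ncmk_add_right, map_add]))
    (AddMonoidHom.mk' (fun t => FF.th CQ (CP.jj (CP.Lam p t)) w)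
      (fun t t' => by beta_reduce; rw [map_add, map_add, FF.th_add₁]))
    (fun n m => by
      simp only [AddMonoidHom.mk'_apply, Xh_mk, CP.Lam_mk]
      rw [CP.hPa2, CP.jj_smul₁, FF.th_smulA])) (CP.Pb.symm 1)
  simp only [AddMonoidHom.mk'_apply] at key
  rw [show ncmk R P Pd p (FF.X CP CQ w)
      = ncmk R P Pd p (FF.Xh CP CQ w (CP.Pb.symm 1)) from rfl]
  rw [key]
  rw [show CP.Lam p (CP.Pb.symm 1) = CP.dd p from by
    rw [← CP.dd_smul_op, op_one, one_smul]]
  rw [CP.jj_dd]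

lemma Xb (bb : B) (w : Qd) :
    FF.X CP CQ (op bb • w) = op (f bb) • FF.X CP CQ w := by
  have h := DFunLike.congr_fun (nct_ext A Pd P
    (FF.Xh CP CQ (op bb • w))
    ((DistribSMul.toAddMonoidHom Pd (op (f bb))).comp (FF.Xh CP CQ w))
    (fun n m => by
      simp only [Xh_mk, AddMonoidHom.coe_comp, Function.comp_apply,
        DistribSMul.toAddMonoidHom_apply]
      rw [FF.th_wB, op_mul, mul_smul])) (CP.Pb.symm 1)
  simp at h; exact h

lemma Xs (s : S) (w : Qd) :
    FF.X CP CQ (s • w) = g s • FF.X CP CQ w := by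
  have h1 : FF.Xh CP CQ (s • w) (CP.Pb.symm 1)
      = FF.Xh CP CQ w (actR (g s) (CP.Pb.symm 1)) := by
    have h := DFunLike.congr_fun (nct_ext A Pd P
      (FF.Xh CP CQ (s • w)) ((FF.Xh CP CQ w).comp (actR (g s)))
      (fun n m => by
        simp only [Xh_mk, AddMonoidHom.coe_comp, Function.comp_apply, actR_mk]
        rw [← FF.th_S, ← CP.jj_smul₂])) (CP.Pb.symm 1)
    simpa using h
  have h2 : g s • FF.Xh CP CQ w (CP.Pb.symm 1)
      = FF.Xh CP CQ w (actL (g s) (CP.Pb.symm 1)) := by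
    have h := DFunLike.congr_fun (nct_ext A Pd P
      ((DistribSMul.toAddMonoidHom Pd (g s)).comp (FF.Xh CP CQ w))
      ((FF.Xh CP CQ w).comp (actL (g s)))
      (fun n m => by
        simp only [Xh_mk, AddMonoidHom.coe_comp, Function.comp_apply, actL_mk,
          DistribSMul.toAddMonoidHom_apply]
        exact smul_comm (g s) (op (FF.th CQ (CP.jj m) w)) n)) (CP.Pb.symm 1)
    simpa using h
  show FF.Xh CP CQ (s • w) (CP.Pb.symm 1) = g s • FF.Xh CP CQ w (CP.Pb.symm 1)
  rw [h1, h2, ← CP.symm_mul_right', ← CP.symm_mul_left', mul_one, one_mul]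

/-- The map `e : Q ⊗_S R →+ P`, `q ⊗ r ↦ φ'(q) • r`. -/
noncomputable def emap : QtensR g Q →+ P :=
  qtLift g Q (mkBiadd (fun q r => op r • FF.phi q)
      (fun q q' r => by
        beta_reduce
        rw [FF.phi_add, smul_add])
      (fun q r r' => by simp [op_add, add_smul]))
    (fun s q r => by
      simp only [mkBiadd_apply]
      rw [FF.phi_S, op_mul, mul_smul])

@[simp] lemma emap_mk (q : Q) (r : R) :
    FF.emap (qrmk g Q q r) = op r • FF.phi q := by
  simp [emap]

/-- `Ψ̄_{p''} : Q ⊗_S Qd →+ Q ⊗_S R`. -/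
noncomputable def Psi (p'' : P) : NCT S Q Qd →+ QtensR g Q :=
  nctLift S Q Qd (mkBiadd
      (fun q w => qrmk g Q q (CP.Pb (ncmk A Pd P (FF.X CP CQ w) p'')))
      (fun q q' w => by simp)
      (fun q w w' => by
        beta_reduce
        rw [FF.X_add, ncmk_add_left, map_add, qrmk_add_right]))
    (fun s q w => by
      simp only [mkBiadd_apply]
      rw [FF.Xs, CP.hPb1, qrmk_rel])

@[simp] lemma Psi_mk (p'' : P) (q : Q) (w : Qd) :
    FF.Psi CP CQ p'' (ncmk S Q Qd q w)
      = qrmk g Q q (CP.Pb (ncmk A Pd P (FF.X CP CQ w) p'')) := by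
  simp [Psi]

/-- The candidate inverse `einv : P →+ Q ⊗_S R`. -/
noncomputable def einv : P →+ QtensR g Q :=
  AddMonoidHom.mk' (fun p => FF.Psi CP CQ (CP.dd p) (CQ.Pa.symm 1))
    (fun p p' => by
      have h := DFunLike.congr_fun (nct_ext S Q Qd
        (FF.Psi CP CQ (CP.dd (p + p')))
        (FF.Psi CP CQ (CP.dd p) + FF.Psi CP CQ (CP.dd p'))
        (fun q w => by
          simp only [Psi_mk, AddMonoidHom.add_apply]
          rw [map_add, ncmk_add_right, map_add, qrmk_add_right])) (CQ.Pa.symm 1)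
      simpa using h)

lemma einv_apply (p : P) :
    FF.einv CP CQ p = FF.Psi CP CQ (CP.dd p) (CQ.Pa.symm 1) := rfl

lemma e_einv (p : P) : FF.emap (FF.einv CP CQ p) = p := by
  rw [FF.einv_apply CP CQ]
  have key : ∀ t : NCT S Q Qd,
      FF.emap (FF.Psi CP CQ (CP.dd p) t)
        = CP.jj (f (CQ.Pa t) • CP.dd p) := by
    intro t
    have h := DFunLike.congr_fun (nct_ext S Q Qd
      (FF.emap.comp (FF.Psi CP CQ (CP.dd p)))
      (AddMonoidHom.mk' (fun t => CP.jj (f (CQ.Pa t) • CP.dd p))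
        (fun t t' => by
          beta_reduce
          rw [map_add, map_add, add_smul, map_add]))
      (fun q w => by
        simp only [AddMonoidHom.coe_comp, Function.comp_apply, Psi_mk,
          emap_mk, AddMonoidHom.mk'_apply]
        rw [CP.pair_i2', FF.paX CP CQ, FF.th_phi])) t
    simpa using h
  rw [key (CQ.Pa.symm 1), CQ.Pa.apply_symm_apply, map_one, one_smul,
    CP.jj_dd]

lemma Psi_zero (t : NCT S Q Qd) : FF.Psi CP CQ (0 : P) t = 0 := by
  have h := DFunLike.congr_fun (nct_ext S Q Qd
    (FF.Psi CP CQ (0 : P)) 0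
    (fun q w => by
      simp only [Psi_mk, AddMonoidHom.zero_apply]
      rw [ncmk_zero_right, map_zero, qrmk_zero_right])) t
  simpa using h

lemma Psi_add (p p' : P) (t : NCT S Q Qd) :
    FF.Psi CP CQ (p + p') t = FF.Psi CP CQ p t + FF.Psi CP CQ p' t := by
  have h := DFunLike.congr_fun (nct_ext S Q Qd
    (FF.Psi CP CQ (p + p'))
    (FF.Psi CP CQ p + FF.Psi CP CQ p')
    (fun q w => by
      simp only [Psi_mk, AddMonoidHom.add_apply]
      rw [ncmk_add_right, map_add, qrmk_add_right])) t
  simpa using h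

lemma Psi_fb (bb : B) (p'' : P) (t : NCT S Q Qd) :
    FF.Psi CP CQ (f bb • p'') t = FF.Psi CP CQ p'' (actR bb t) := by
  have h := DFunLike.congr_fun (nct_ext S Q Qd
    (FF.Psi CP CQ (f bb • p''))
    ((FF.Psi CP CQ p'').comp (actR bb))
    (fun q w => by
      simp only [Psi_mk, AddMonoidHom.coe_comp, Function.comp_apply, actR_mk]
      rw [← ncmk_rel, ← FF.Xb CP CQ])) t
  simpa using h

lemma Psi_opR (r : R) (p'' : P) (t : NCT S Q Qd) :
    FF.Psi CP CQ (op r • p'') t = Rr r (FF.Psi CP CQ p'' t) := by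
  have h := DFunLike.congr_fun (nct_ext S Q Qd
    (FF.Psi CP CQ (op r • p''))
    ((Rr r).comp (FF.Psi CP CQ p''))
    (fun q w => by
      simp only [Psi_mk, AddMonoidHom.coe_comp, Function.comp_apply, Rr_mk]
      rw [CP.hPb2])) t
  simpa using h

lemma einv_opR (r : R) (p : P) :
    FF.einv CP CQ (op r • p) = Rr r (FF.einv CP CQ p) := by
  rw [FF.einv_apply CP CQ, FF.einv_apply CP CQ, CP.dd_smul₂, FF.Psi_opR CP CQ]

/-- `id ⊗ j_Q : A ⊗_B Q →+ A ⊗_B Q`. -/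
noncomputable def Jtb : AtensQ f Q →+ AtensQ f Q :=
  aqLift f Q (mkBiadd (fun a q => aqmk f Q a (CQ.jj q))
      (fun a a' q => by simp)
      (fun a q q' => by
        beta_reduce
        rw [map_add, aqmk_add_right]))
    (fun bb a q => by
      simp only [mkBiadd_apply]
      rw [CQ.jj_smul₁, aqmk_rel])

@[simp] lemma Jtb_mk (a : A) (q : Q) :
    Jtb CQ (aqmk f Q a q) = aqmk f Q a (CQ.jj q) := by
  simp [Jtb]

/-- `id ⊗ d_Q : A ⊗_B Q →+ A ⊗_B Q`. -/
noncomputable def Dtb : AtensQ f Q →+ AtensQ f Q :=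
  aqLift f Q (mkBiadd (fun a q => aqmk f Q a (CQ.dd q))
      (fun a a' q => by simp)
      (fun a q q' => by
        beta_reduce
        rw [map_add, aqmk_add_right]))
    (fun bb a q => by
      simp only [mkBiadd_apply]
      rw [CQ.dd_smul₁, aqmk_rel])

@[simp] lemma Dtb_mk (a : A) (q : Q) :
    Dtb CQ (aqmk f Q a q) = aqmk f Q a (CQ.dd q) := by
  simp [Dtb]

lemma Jtb_Dtb (t : AtensQ f Q) :
    Jtb CQ (Dtb CQ t) = t := by
  have h := DFunLike.congr_fun (aq_ext f Q
    ((Jtb CQ).comp (Dtb CQ)) (AddMonoidHom.id _)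
    (fun a q => by
      simp only [AddMonoidHom.coe_comp, Function.comp_apply, Dtb_mk, Jtb_mk,
        AddMonoidHom.id_apply]
      rw [CQ.jj_dd])) t
  simpa using h

/-- The distinguished element `c̄ ∈ R`. -/
noncomputable def cR : R :=
  ((CQ.LB).map fun c =>
    CP.Pb (ncmk A Pd P (FF.X CP CQ c.1) (CP.dd (FF.phi c.2)))).sum

lemma cAct (p : P) :
    op (FF.cR CP CQ) • p = FF.E (Dtb CQ (FF.E.symm p)) := by
  have step2 : ∀ t : AtensQ f Q,
      ((CQ.LB).map fun c => Thb CQ c.1 t • FF.phi c.2).sum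
        = FF.E (Dtb CQ t) := by
    intro t
    have h := DFunLike.congr_fun (aq_ext f Q
      (AddMonoidHom.mk'
        (fun t => ((CQ.LB).map fun c => Thb CQ c.1 t • FF.phi c.2).sum)
        (fun t t' => by
          rw [← list_sum_map_add]
          apply list_sum_congr
          intro c _
          rw [map_add, add_smul]))
      (FF.E.toAddMonoidHom.comp (Dtb CQ))
      (fun a q => by
        simp only [AddMonoidHom.mk'_apply, AddMonoidHom.coe_comp,
          Function.comp_apply, AddEquiv.coe_toAddMonoidHom, Dtb_mk]
        rw [FF.E_aqmk]
        rw [list_sum_congr (l := CQ.LB)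
          (F := fun c => Thb CQ c.1 (aqmk f Q a q) • FF.phi c.2)
          (G := fun c => a •
            (f (CQ.Pa (ncmk S Q Qd q c.1)) • FF.phi c.2))
          (by
            intro c _
            beta_reduce
            rw [Thb_mk, mul_smul])]
        rw [list_sum_pull' (fun x => a • x)
          (by simp) (fun x y => by simp)
          CQ.LB (fun c => f (CQ.Pa (ncmk S Q Qd q c.1)) • FF.phi c.2)]
        rw [list_sum_congr (l := CQ.LB)
          (F := fun c => f (CQ.Pa (ncmk S Q Qd q c.1)) • FF.phi c.2)
          (G := fun c => FF.phi (CQ.Pa (ncmk S Q Qd q c.1) • c.2))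
          (by
            intro c _
            beta_reduce
            rw [FF.phi_B])]
        rw [list_sum_pull' (fun x => FF.phi x)
          (FF.phi_zero) (fun x y => FF.phi_add x y)
          CQ.LB (fun c => CQ.Pa (ncmk S Q Qd q c.1) • c.2)]
        rw [← CQ.dd_apply])) t
    simpa using h
  have step1 : op (FF.cR CP CQ) • p
      = ((CQ.LB).map fun c => Thb CQ c.1 (FF.E.symm p) • FF.phi c.2).sum := by
    unfold cR
    rw [← list_sum_pull' (fun t => op t • p)
      (by simp) (fun x y => by simp [op_add, add_smul])
      CQ.LB (fun c => CP.Pb (ncmk A Pd P (FF.X CP CQ c.1) (CP.dd (FF.phi c.2))))]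
    apply list_sum_congr
    intro c _
    beta_reduce
    rw [CP.pair_i2', FF.paX CP CQ, ← CP.dd_smul₁, CP.jj_dd]
    rfl
  rw [step1]
  exact step2 (FF.E.symm p)

include CP in
lemma exists_c'' : ∃ c'' : R, ∀ p : P,
    FF.E (Jtb CQ (FF.E.symm p)) = op c'' • p := by
  obtain ⟨r0, hr0⟩ := CP.end_full' (AddMonoidHom.mk'
    (fun p => FF.E (Jtb CQ (FF.E.symm p))) (fun p p' => by
      beta_reduce
      rw [map_add, map_add, map_add]))
    (by
      intro a p
      simp only [AddMonoidHom.mk'_apply]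
      rw [FF.Esymm_smulA]
      have h : Jtb CQ (mulA a (FF.E.symm p))
          = mulA a (Jtb CQ (FF.E.symm p)) := by
        have := DFunLike.congr_fun (aq_ext f Q
          ((Jtb CQ).comp (mulA a)) ((mulA a).comp (Jtb CQ))
          (fun a' q => by simp)) (FF.E.symm p)
        simpa using this
      rw [h, FF.E_mulA])
  exact ⟨r0, fun p => hr0 p⟩

lemma cR_c'' (c'' : R) (hc'' : ∀ p : P,
    FF.E (Jtb CQ (FF.E.symm p)) = op c'' • p) :
    FF.cR CP CQ * c'' = 1 := by
  apply CP.act_eq₂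
  intro p
  rw [op_mul, mul_smul, FF.cAct CP CQ, ← hc'', FF.E.symm_apply_apply, Jtb_Dtb,
    FF.E.apply_symm_apply, op_one, one_smul]

lemma phi_ddQ (q' : Q) :
    CP.dd (FF.phi (CQ.dd q'))
      = ((CQ.LB).map fun c =>
          f (CQ.Pa (ncmk S Q Qd q' c.1)) • CP.dd (FF.phi c.2)).sum := by
  rw [CQ.dd_apply]
  rw [← list_sum_pull' (fun x => CP.dd (FF.phi x))
    (by simp [FF.phi_zero]) (fun x y => by simp [FF.phi_add])
    CQ.LB (fun c => CQ.Pa (ncmk S Q Qd q' c.1) • c.2)]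
  apply list_sum_congr
  intro c _
  beta_reduce
  rw [FF.phi_B, CP.dd_smul₁]

lemma einv_phi (q : Q) :
    FF.einv CP CQ (FF.phi q) = qrmk g Q (CQ.jj q) (FF.cR CP CQ) := by
  rw [FF.einv_apply CP CQ]
  conv_lhs => rw [show q = CQ.dd (CQ.jj q) from (CQ.dd_jj q).symm]
  rw [FF.phi_ddQ CP CQ (CQ.jj q)]
  rw [← list_sum_pull' (fun x => FF.Psi CP CQ x (CQ.Pa.symm 1))
    (FF.Psi_zero CP CQ _) (fun x y => FF.Psi_add CP CQ x y _)
    CQ.LB (fun c => f (CQ.Pa (ncmk S Q Qd (CQ.jj q) c.1)) • CP.dd (FF.phi c.2))]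
  rw [list_sum_congr (l := CQ.LB)
    (F := fun c => FF.Psi CP CQ
      (f (CQ.Pa (ncmk S Q Qd (CQ.jj q) c.1)) • CP.dd (FF.phi c.2)) (CQ.Pa.symm 1))
    (G := fun c => qrmk g Q (CQ.jj q)
      (CP.Pb (ncmk A Pd P (FF.X CP CQ c.1) (CP.dd (FF.phi c.2)))))
    (by
      intro c _
      beta_reduce
      rw [FF.Psi_fb CP CQ, ← CQ.symm_mul_right, one_mul,
        CQ.Pa.symm_apply_apply, Psi_mk])]
  rw [list_sum_pull' (fun x => qrmk g Q (CQ.jj q) x)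
    (by simp) (fun x y => by simp)
    CQ.LB (fun c => CP.Pb (ncmk A Pd P (FF.X CP CQ c.1) (CP.dd (FF.phi c.2))))]
  rfl

lemma einv_surj (t : QtensR g Q) : ∃ p : P, FF.einv CP CQ p = t := by
  obtain ⟨c'', hc''⟩ := FF.exists_c'' CP CQ
  have key : ∀ (q : Q) (r : R),
      FF.einv CP CQ (op (c'' * r) • FF.phi (CQ.dd q)) = qrmk g Q q r := by
    intro q r
    rw [FF.einv_opR CP CQ, FF.einv_phi CP CQ, CQ.jj_dd, Rr_mk,
      ← mul_assoc, FF.cR_c'' CP CQ c'' hc'', one_mul]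
  obtain ⟨l, rfl⟩ := qt_exists_list g Q t
  refine ⟨(l.map fun c => op (c'' * c.2) • FF.phi (CQ.dd c.1)).sum, ?_⟩
  rw [map_list_sum, List.map_map]
  apply list_sum_congr
  intro c _
  simp only [Function.comp_apply]
  exact key c.1 c.2

/-- The backward direction: from an `A`-`S`-equivalence `A ⊗_B Q ≃ P` to a
`B`-`R`-equivalence `Q ⊗_S R ≃ P`. -/
noncomputable def toQR : QRequiv (f := f) (g := g) (P := P) (Q := Q) where
  e := { toFun := FF.emap
         invFun := FF.einv CP CQ
         left_inv := by
           intro t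
           obtain ⟨p, rfl⟩ := FF.einv_surj CP CQ t
           rw [FF.e_einv CP CQ]
         right_inv := fun p => FF.e_einv CP CQ p
         map_add' := FF.emap.map_add }
  he1 := by
    intro bb q r
    show FF.emap _ = f bb • FF.emap _
    rw [emap_mk, emap_mk, FF.phi_B]
    exact (smul_comm (f bb) (op r) (FF.phi q)).symm
  he2 := by
    intro r' q r
    show FF.emap _ = op r' • FF.emap _
    rw [emap_mk, emap_mk, op_mul, mul_smul]

end AQequiv
end Backward

/-- **Characterizations of Morita equivalent ring extensions.**
Let `A ⊇ B` (along `f`) and `R ⊇ S` (along `g`) be ring extensions, `P` an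
invertible `A`-`R`-bimodule with inverse bimodule `Pd` (`P ⊗_R Pd ≅ A`,
`Pd ⊗_A P ≅ R` as bimodules) and `Q` an invertible `B`-`S`-bimodule with
inverse `Qd`.  Then `Q ⊗_S R ≅ P` as `B`-`R`-bimodules if and only if
`A ⊗_B Q ≅ P` as `A`-`S`-bimodules. -/
theorem morita_extension_iff
    (ePPd : ∃ e : NCT R P Pd ≃+ A,
      (∀ (a : A) (p : P) (q : Pd),
        e (ncmk R P Pd (a • p) q) = a * e (ncmk R P Pd p q)) ∧
      (∀ (a : A) (p : P) (q : Pd),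
        e (ncmk R P Pd p (op a • q)) = e (ncmk R P Pd p q) * a))
    (ePdP : ∃ e : NCT A Pd P ≃+ R,
      (∀ (r : R) (q : Pd) (p : P),
        e (ncmk A Pd P (r • q) p) = r * e (ncmk A Pd P q p)) ∧
      (∀ (r : R) (q : Pd) (p : P),
        e (ncmk A Pd P q (op r • p)) = e (ncmk A Pd P q p) * r))
    (eQQd : ∃ e : NCT S Q Qd ≃+ B,
      (∀ (b : B) (q : Q) (q' : Qd),
        e (ncmk S Q Qd (b • q) q') = b * e (ncmk S Q Qd q q')) ∧
      (∀ (b : B) (q : Q) (q' : Qd),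
        e (ncmk S Q Qd q (op b • q')) = e (ncmk S Q Qd q q') * b))
    (eQdQ : ∃ e : NCT B Qd Q ≃+ S,
      (∀ (s : S) (q' : Qd) (q : Q),
        e (ncmk B Qd Q (s • q') q) = s * e (ncmk B Qd Q q' q)) ∧
      (∀ (s : S) (q' : Qd) (q : Q),
        e (ncmk B Qd Q q' (op s • q)) = e (ncmk B Qd Q q' q) * s)) :
    (∃ e : QtensR g Q ≃+ P,
      (∀ (b : B) (q : Q) (r : R),
        e (qrmk g Q (b • q) r) = f b • e (qrmk g Q q r)) ∧
      (∀ (r' : R) (q : Q) (r : R),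
        e (qrmk g Q q (r * r')) = op r' • e (qrmk g Q q r)))
    ↔
    (∃ e : AtensQ f Q ≃+ P,
      (∀ (a' a : A) (q : Q),
        e (aqmk f Q (a' * a) q) = a' • e (aqmk f Q a q)) ∧
      (∀ (s : S) (a : A) (q : Q),
        e (aqmk f Q a (op s • q)) = op (g s) • e (aqmk f Q a q))) := by
  obtain ⟨α, hα1, hα2⟩ := ePPd
  obtain ⟨β, hβ1, hβ2⟩ := ePdP
  obtain ⟨γ, hγ1, hγ2⟩ := eQQd
  obtain ⟨δ, hδ1, hδ2⟩ := eQdQ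
  obtain ⟨LA, hLA⟩ := nct_exists_list R P Pd (α.symm 1)
  obtain ⟨LB, hLB⟩ := nct_exists_list A Pd P (β.symm 1)
  obtain ⟨LC, hLC⟩ := nct_exists_list S Q Qd (γ.symm 1)
  obtain ⟨LD, hLD⟩ := nct_exists_list B Qd Q (δ.symm 1)
  have CP : MoritaPair (T₁ := A) (T₂ := R) (M := P) (N := Pd) :=
    ⟨α, β, hα1, hα2, hβ1, hβ2, LA, hLA.symm, LB, hLB.symm⟩
  have CQ : MoritaPair (T₁ := B) (T₂ := S) (M := Q) (N := Qd) :=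
    ⟨γ, δ, hγ1, hγ2, hδ1, hδ2, LC, hLC.symm, LD, hLD.symm⟩
  constructor
  · rintro ⟨e, he1, he2⟩
    have EE : QRequiv (f := f) (g := g) (P := P) (Q := Q) := ⟨e, he1, he2⟩
    exact ⟨(EE.toAQ CP CQ).E, (EE.toAQ CP CQ).hE1, (EE.toAQ CP CQ).hE2⟩
  · rintro ⟨E, hE1, hE2⟩
    have FF : AQequiv (f := f) (g := g) (P := P) (Q := Q) := ⟨E, hE1, hE2⟩
    exact ⟨(FF.toQR CP CQ).e, (FF.toQR CP CQ).he1, (FF.toQR CP CQ).he2⟩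
end
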